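/- arXiv:1509.07457 — 7 statements merged into one kernel-verified Lean document; each statement's English description precedes it below -/
import Mathlib

section
/- For a finite connected simple graph G with at least 2 vertices, the dimension of the discrete Morse complex 𝔐(G) equals |V_G| − 2. Equivalently, the maximum size of an acyclic matching on the Hasse diagram of G is |V_G| − 1. -/
/-- `S` is a simplex of the discrete Morse complex `𝔐(G)` of the simple graph `G`
(equivalently, an acyclic matching on the Hasse diagram of `G`): a set of oriented
edges such that no two have the same source vertex and containing no directed cycle. -/
def IsMorseSimplex {V : Type*} (G : SimpleGraph V) (S : Finset (V × V)) : Prop :=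
  (∀ p ∈ S, G.Adj p.1 p.2) ∧
  (∀ p ∈ S, ∀ q ∈ S, p.1 = q.1 → p = q) ∧
  (∀ v : V, ¬ Relation.TransGen (fun a b => (a, b) ∈ S) v v)

lemma exists_parent {V : Type*} (G : SimpleGraph V) (hG : G.Connected) (r v : V)
    (hv : v ≠ r) : ∃ w, G.Adj v w ∧ G.dist w r < G.dist v r := by
  obtain ⟨p, hp⟩ := (hG v r).exists_walk_length_eq_dist
  cases p with
  | nil => exact absurd rfl hv
  | cons h q =>
    refine ⟨_, h, ?_⟩
    have h1 : G.dist _ r ≤ q.length := SimpleGraph.dist_le q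
    simp only [SimpleGraph.Walk.length_cons] at hp
    omega

/-- For a finite connected simple graph `G` with at least two vertices, the maximal
cardinality of a simplex of the discrete Morse complex (an acyclic matching) is
`|V_G| - 1`; that is, `dim 𝔐(G) = |V_G| - 2`. -/
theorem stmt_1 {V : Type*} [Fintype V] [DecidableEq V] (G : SimpleGraph V)
    (hG : G.Connected) (h2 : 2 ≤ Fintype.card V) :
    IsGreatest {n : ℕ | ∃ S : Finset (V × V), IsMorseSimplex G S ∧ S.card = n}
      (Fintype.card V - 1) := by
  classical
  have hVne : Nonempty V := Fintype.card_pos_iff.mp (by omega)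
  obtain ⟨r⟩ := hVne
  constructor
  · -- membership: construct an acyclic matching of size |V| - 1
    set f : V → V := fun v =>
      if h : v = r then v else Classical.choose (exists_parent G hG r v h) with hf
    have hfspec : ∀ v, v ≠ r → G.Adj v (f v) ∧ G.dist (f v) r < G.dist v r := by
      intro v hv
      simp only [hf, dif_neg hv]
      exact Classical.choose_spec (exists_parent G hG r v hv)
    refine ⟨(Finset.univ.erase r).image (fun v => (v, f v)), ⟨?_, ?_, ?_⟩, ?_⟩
    · rintro p hp
      simp only [Finset.mem_image, Finset.mem_erase] at hp
      obtain ⟨a, ⟨ha, _⟩, rfl⟩ := hp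
      exact (hfspec a ha).1
    · rintro p hp q hq hpq
      simp only [Finset.mem_image, Finset.mem_erase] at hp hq
      obtain ⟨a, _, rfl⟩ := hp
      obtain ⟨b, _, rfl⟩ := hq
      simp only at hpq
      subst hpq; rfl
    · intro v hv
      have key : ∀ a b : V, Relation.TransGen
          (fun a b => (a, b) ∈ (Finset.univ.erase r).image (fun v => (v, f v))) a b →
          G.dist b r < G.dist a r := by
        intro a b h
        induction h with
        | single h =>
          simp only [Finset.mem_image, Finset.mem_erase] at h
          obtain ⟨c, ⟨hc, _⟩, hc2⟩ := h
          obtain ⟨h1, h2⟩ := Prod.mk.injEq .. ▸ hc2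
          subst h1
          rw [← h2]
          exact (hfspec c hc).2
        | tail h hs ih =>
          refine lt_trans ?_ ih
          simp only [Finset.mem_image, Finset.mem_erase] at hs
          obtain ⟨c, ⟨hc, _⟩, hc2⟩ := hs
          obtain ⟨h1, h2⟩ := Prod.mk.injEq .. ▸ hc2
          subst h1
          rw [← h2]
          exact (hfspec c hc).2
      exact absurd (key v v hv) (lt_irrefl _)
    · rw [Finset.card_image_of_injective _ (fun a b h => (Prod.mk.injEq .. ▸ h).1),
        Finset.card_erase_of_mem (Finset.mem_univ r), Finset.card_univ]
  · -- upper bound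
    rintro n ⟨S, ⟨hadj, hsrc, hacy⟩, rfl⟩
    have himg : (S.image Prod.fst).card = S.card :=
      Finset.card_image_of_injOn (fun p hp q hq h => hsrc p hp q hq h)
    by_contra hcon
    push_neg at hcon
    have hle : (S.image Prod.fst).card ≤ Fintype.card V := by
      simpa using Finset.card_le_card (Finset.subset_univ (S.image Prod.fst))
    have hcard : S.card = Fintype.card V := by omega
    have huniv : S.image Prod.fst = Finset.univ :=
      Finset.eq_univ_of_card _ (by omega)
    have hnext : ∀ v : V, ∃ w, (v, w) ∈ S := by
      intro v
      have : v ∈ S.image Prod.fst := huniv ▸ Finset.mem_univ v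
      simp only [Finset.mem_image] at this
      obtain ⟨p, hp, hp2⟩ := this
      exact ⟨p.2, by rw [← hp2]; exact hp⟩
    set R : V → V → Prop := fun a b =>
      Relation.TransGen (fun a b => (a, b) ∈ S) b a with hR
    haveI : IsTrans V R := ⟨fun a b c h1 h2 => Relation.TransGen.trans h2 h1⟩
    haveI : IsIrrefl V R := ⟨fun a h => hacy a h⟩
    have wf : WellFounded R := Finite.wellFounded_of_trans_of_irrefl R
    obtain ⟨m, _, hm⟩ := wf.has_min Set.univ ⟨r, Set.mem_univ r⟩
    obtain ⟨w, hw⟩ := hnext m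
    exact hm w (Set.mem_univ w) (Relation.TransGen.single hw)
end

section
/- Let G be a finite connected simple graph with at least 2 edges. A vertex v of G incident to edge e is a leaf (degree 1) if and only if the vertex (v,e) of 𝔐(G) is compatible (forms an edge of 𝔐(G)) with every other vertex of 𝔐(G) except (w,e), where w is the other endpoint of e. Equivalently, v is a leaf iff the degree of (v,e) in the 1-skeleton of 𝔐(G) equals 2|E_G| − 2. -/
lemma morse_key {V : Type*} [DecidableEq V] (G : SimpleGraph V) {v w : V}
    (hvw : G.Adj v w) {p : V × V} (hp : G.Adj p.1 p.2) (hne : p ≠ (v, w)) :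
    IsMorseSimplex G {(v, w), p} ↔ p.1 ≠ v ∧ p ≠ (w, v) := by
  obtain ⟨a, b⟩ := p
  have hab : a ≠ b := hp.ne
  have hvw' : v ≠ w := hvw.ne
  constructor
  · rintro ⟨_, hsrc, hcyc⟩
    constructor
    · intro h
      exact hne (hsrc (a, b) (by simp) (v, w) (by simp) h)
    · rintro h
      rw [Prod.mk.injEq] at h
      have s1 : (v, w) ∈ ({(v, w), (a, b)} : Finset (V × V)) := by simp
      have s2 : (w, v) ∈ ({(v, w), (a, b)} : Finset (V × V)) := by
        simp [← h.1, ← h.2]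
      exact hcyc v (Relation.TransGen.tail (Relation.TransGen.single s1) s2)
  · rintro ⟨h1, h2⟩
    have hwv : ¬(a = w ∧ b = v) := by
      intro ⟨ha, hb⟩; exact h2 (by simp [ha, hb])
    refine ⟨?_, ?_, ?_⟩
    · intro q hq
      simp only [Finset.mem_insert, Finset.mem_singleton] at hq
      rcases hq with rfl | rfl
      · exact hvw
      · exact hp
    · intro q hq r hr h
      simp only [Finset.mem_insert, Finset.mem_singleton] at hq hr
      rcases hq with rfl | rfl <;> rcases hr with rfl | rfl
      · rfl
      · exact absurd h.symm h1
      · exact absurd h h1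
      · rfl
    · have char : ∀ x y, Relation.TransGen
          (fun s t => (s, t) ∈ ({(v, w), (a, b)} : Finset (V × V))) x y →
          (x = v ∧ y = w) ∨ (x = a ∧ y = b) ∨ (x = v ∧ y = b ∧ w = a) ∨
          (x = a ∧ y = w ∧ b = v) := by
        intro x y h
        induction h with
        | single h =>
          simp only [Finset.mem_insert, Finset.mem_singleton, Prod.mk.injEq] at h
          tauto
        | tail h1 h2 ih =>
          simp only [Finset.mem_insert, Finset.mem_singleton, Prod.mk.injEq] at h2
          rcases ih with ⟨hx, hc⟩ | ⟨hx, hc⟩ | ⟨hx, hc, hwa⟩ | ⟨hx, hc, hbv⟩ <;>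
            rcases h2 with ⟨hc', hy⟩ | ⟨hc', hy⟩ <;>
            subst hx <;> subst hc <;> subst hy <;>
            first
            | (exfalso; exact hvw' (hc'.symm))
            | (exfalso; exact hab hc'.symm)
            | (exfalso; exact hab hc')
            | (exfalso; exact hwv ⟨hwa.symm, hc'⟩)
            | (exfalso; exact hwv ⟨hc'.symm, hbv⟩)
            | tauto
      intro x hx
      rcases char x x hx with ⟨rfl, h⟩ | ⟨rfl, h⟩ | ⟨rfl, h, hwa⟩ | ⟨rfl, h, hbv⟩
      · exact hvw' h
      · exact hab h
      · exact hwv ⟨hwa.symm, h.symm⟩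
      · exact hwv ⟨h, hbv⟩

/-- Let `G` be a finite connected simple graph with at least two edges, and let `e = vw`
be an edge of `G`.  Then `v` is a leaf of `G` if and only if the vertex `(v,e)` of
`𝔐(G)` is compatible with every vertex of `𝔐(G)` other than itself and `(w,e)`;
equivalently, iff the degree of `(v,e)` in the 1-skeleton of `𝔐(G)` is `2|E_G| - 2`. -/
theorem stmt_4 {V : Type*} [Fintype V] [DecidableEq V] (G : SimpleGraph V)
    [DecidableRel G.Adj] (hG : G.Connected) (h2 : 2 ≤ G.edgeFinset.card)
    (v w : V) (hvw : G.Adj v w) :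
    (G.degree v = 1 ↔
      ∀ p : V × V, G.Adj p.1 p.2 → p ≠ (v, w) → p ≠ (w, v) →
        IsMorseSimplex G {(v, w), p}) ∧
    (G.degree v = 1 ↔
      {p : V × V | G.Adj p.1 p.2 ∧ p ≠ (v, w) ∧ IsMorseSimplex G {(v, w), p}}.ncard =
        2 * G.edgeFinset.card - 2) := by
  have hvw' : v ≠ w := hvw.ne
  -- if degree v = 1 then every neighbor pair with source v is (v,w)
  have hdeg1 : G.degree v = 1 → ∀ u, G.Adj v u → u = w := by
    intro h u hu
    have h1 : (G.neighborFinset v).card = 1 := h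
    obtain ⟨x, hx⟩ := Finset.card_eq_one.mp h1
    have hu' : u ∈ G.neighborFinset v := by simpa using hu
    have hw' : w ∈ G.neighborFinset v := by simpa using hvw
    rw [hx, Finset.mem_singleton] at hu' hw'
    rw [hu', hw']
  -- the first equivalence
  have iff1 : G.degree v = 1 ↔
      ∀ p : V × V, G.Adj p.1 p.2 → p ≠ (v, w) → p ≠ (w, v) →
        IsMorseSimplex G {(v, w), p} := by
    constructor
    · intro hd p hp hne hne'
      rw [morse_key G hvw hp hne]
      refine ⟨?_, hne'⟩
      intro h
      apply hne
      have := hdeg1 hd p.2 (h ▸ hp)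
      rw [Prod.ext_iff]
      exact ⟨h, this⟩
    · intro H
      by_contra hd
      have hge : 1 ≤ G.degree v := by
        rw [← SimpleGraph.card_neighborFinset_eq_degree]
        exact Finset.card_pos.mpr ⟨w, by simpa using hvw⟩
      have hlt : 1 < G.degree v := lt_of_le_of_ne hge (Ne.symm hd)
      have : 1 < (G.neighborFinset v).card := hlt
      obtain ⟨u, hu, hune⟩ := Finset.exists_mem_ne this w
      rw [SimpleGraph.mem_neighborFinset] at hu
      have h1 := H (v, u) hu (by simp [hune]) (by simp only [ne_eq, Prod.mk.injEq, not_and]; exact fun h => absurd h hvw')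
      rw [morse_key G hvw hu (by simp [hune])] at h1
      exact h1.1 rfl
  refine ⟨iff1, ?_⟩
  -- counting
  set A : Finset (V × V) := Finset.univ.filter (fun p => G.Adj p.1 p.2) with hAdef
  have hAcard : A.card = 2 * G.edgeFinset.card := by
    rw [← SimpleGraph.dart_card_eq_twice_card_edges]
    rw [hAdef, ← Fintype.card_subtype]
    exact (Fintype.card_congr ⟨fun d => ⟨d.toProd, d.adj⟩, fun p => ⟨p.1, p.2⟩,
      fun _ => rfl, fun _ => rfl⟩).symm
  have hsrc : (A.filter (fun p => p.1 = v)).card = G.degree v := by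
    rw [← SimpleGraph.card_neighborFinset_eq_degree]
    apply Finset.card_bij (fun p _ => p.2)
    · intro p hp
      simp only [hAdef, Finset.mem_filter, Finset.mem_univ, true_and] at hp
      rw [SimpleGraph.mem_neighborFinset, ← hp.2]
      exact hp.1
    · intro p hp q hq h
      simp only [hAdef, Finset.mem_filter] at hp hq
      exact Prod.ext (hp.2.trans hq.2.symm) h
    · intro u hu
      rw [SimpleGraph.mem_neighborFinset] at hu
      exact ⟨(v, u), by simp [hAdef, hu], rfl⟩
  -- describe the set as a finset
  have hset : {p : V × V | G.Adj p.1 p.2 ∧ p ≠ (v, w) ∧ IsMorseSimplex G {(v, w), p}} =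
      ↑((A.filter (fun p => p.1 ≠ v)).erase (w, v)) := by
    ext p
    simp only [Set.mem_setOf_eq, Finset.coe_erase, Set.mem_diff, Finset.mem_coe,
      Finset.mem_filter, hAdef, Finset.mem_univ, true_and, Set.mem_singleton_iff]
    constructor
    · rintro ⟨hp, hne, hm⟩
      rw [morse_key G hvw hp hne] at hm
      exact ⟨⟨hp, hm.1⟩, hm.2⟩
    · rintro ⟨⟨hp, h1⟩, h2⟩
      have hne : p ≠ (v, w) := by
        intro h; exact h1 (by rw [h])
      exact ⟨hp, hne, (morse_key G hvw hp hne).mpr ⟨h1, h2⟩⟩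
  rw [hset, Set.ncard_coe_finset]
  have hmem : (w, v) ∈ A.filter (fun p => p.1 ≠ v) := by
    simp [hAdef, hvw.symm, hvw'.symm]
  rw [Finset.card_erase_of_mem hmem]
  have hsplit : (A.filter (fun p => p.1 ≠ v)).card = A.card - G.degree v := by
    have := Finset.card_filter_add_card_filter_not
      (s := A) (p := fun p => p.1 = v)
    rw [hsrc] at this
    simp only [ne_eq]
    omega
  rw [hsplit, hAcard]
  -- bounds: deg v + deg w ≤ 2|E|, both ≥ 1
  have hdw : 1 ≤ G.degree w := by
    rw [← SimpleGraph.card_neighborFinset_eq_degree]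
    exact Finset.card_pos.mpr ⟨v, by simpa using hvw.symm⟩
  have hdv : 1 ≤ G.degree v := by
    rw [← SimpleGraph.card_neighborFinset_eq_degree]
    exact Finset.card_pos.mpr ⟨w, by simpa using hvw⟩
  have hsum : G.degree v + G.degree w ≤ 2 * G.edgeFinset.card := by
    rw [← SimpleGraph.sum_degrees_eq_twice_card_edges]
    calc G.degree v + G.degree w = ∑ x ∈ {v, w}, G.degree x := by
          rw [Finset.sum_pair hvw']
      _ ≤ ∑ x, G.degree x := Finset.sum_le_sum_of_subset (Finset.subset_univ _)
  omega
end

section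
/- If G and G' are finite connected simple graphs with isomorphic discrete Morse complexes, and G is a cycle C_n, then G' is also isomorphic to C_n. -/
/-- The vertices of the discrete Morse complex of `G`: the oriented edges of `G`. -/
abbrev OrientedEdge {V : Type*} (G : SimpleGraph V) : Type _ := {p : V × V // G.Adj p.1 p.2}

/-- `𝔐(G)` and `𝔐(G')` are isomorphic simplicial complexes. -/
def MorseEquiv {V W : Type*} [DecidableEq V] [DecidableEq W]
    (G : SimpleGraph V) (G' : SimpleGraph W) : Prop :=
  ∃ F : OrientedEdge G ≃ OrientedEdge G',
    ∀ S : Finset (OrientedEdge G),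
      IsMorseSimplex G (S.image Subtype.val) ↔
        IsMorseSimplex G' ((S.image F).image Subtype.val)

open Finset

lemma mod_small_cases (m x : ℕ) (hx : x < 2*m) : x % m = if x < m then x else x - m := by
  split_ifs with h
  · exact Nat.mod_eq_of_lt h
  · rw [Nat.mod_eq_sub_mod (by omega), Nat.mod_eq_of_lt (by omega)]

lemma fin_sub_one {m : ℕ} (hm : 2 ≤ m) (a b : Fin m) :
    (a - b).val = 1 ↔ (a.val = b.val + 1 ∨ (b.val = m - 1 ∧ a.val = 0)) := by
  have ha := a.isLt; have hb := b.isLt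
  rw [Fin.sub_def]
  simp only
  rw [mod_small_cases _ _ (by omega)]
  split_ifs with h <;> omega

lemma two_solvable (m : ℕ) (A : ℕ) : ∃ t, 2*t % m = A % m ∨ 2*t % m = (A+1) % m := by
  induction A with
  | zero => exact ⟨0, Or.inl rfl⟩
  | succ B ih =>
    obtain ⟨t, ht | ht⟩ := ih
    · exact ⟨t + 1, Or.inr (by rw [show 2*(t+1) = 2*t + 2 by ring, Nat.add_mod, ht, ← Nat.add_mod, show B + 2 = B + 1 + 1 by ring])⟩
    · exact ⟨t, Or.inl ht⟩
section
variable {V : Type*} [Fintype V] [DecidableEq V] (G : SimpleGraph V) [DecidableRel G.Adj]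

def Compat (e f : OrientedEdge G) : Prop :=
  e.1.1 ≠ f.1.1 ∧ e.1 ≠ (f.1.2, f.1.1)

instance (e f : OrientedEdge G) : Decidable (Compat G e f) := by
  unfold Compat; infer_instance

lemma compat_count (e : OrientedEdge G) :
    (Finset.univ.filter (fun f : OrientedEdge G => f ≠ e ∧ Compat G e f)).card
      + (G.degree e.1.1 + 1) = Fintype.card (OrientedEdge G) := by
  classical
  have hsplit := Finset.card_filter_add_card_filter_not
    (s := (univ : Finset (OrientedEdge G))) (p := fun f => f ≠ e ∧ Compat G e f)
  rw [card_univ] at hsplit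
  have hiff : ∀ f : OrientedEdge G,
      (¬(f ≠ e ∧ Compat G e f)) ↔ (f.1.1 = e.1.1 ∨ f.1 = (e.1.2, e.1.1)) := by
    intro f
    constructor
    · intro hn
      by_cases hfe : f = e
      · subst hfe; exact Or.inl rfl
      · have : ¬ Compat G e f := fun hc => hn ⟨hfe, hc⟩
        unfold Compat at this
        push_neg at this
        rcases em (e.1.1 = f.1.1) with h | h
        · exact Or.inl h.symm
        · have h2 := this h
          right
          have := Prod.ext_iff.mp h2
          exact Prod.ext_iff.mpr ⟨this.2.symm, this.1.symm⟩
    · rintro (h | h) ⟨hfe, hc1, hc2⟩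
      · exact hc1 h.symm
      · exact hc2 (Prod.ext_iff.mpr ⟨(Prod.ext_iff.mp h).2.symm, (Prod.ext_iff.mp h).1.symm⟩)
  have heq : (univ.filter (fun f : OrientedEdge G => ¬(f ≠ e ∧ Compat G e f)))
      = univ.filter (fun f : OrientedEdge G => f.1.1 = e.1.1 ∨ f.1 = (e.1.2, e.1.1)) :=
    filter_congr (fun f _ => by rw [hiff f])
  rw [heq, filter_or] at hsplit
  have hdisj : Disjoint (univ.filter (fun f : OrientedEdge G => f.1.1 = e.1.1))
      (univ.filter (fun f : OrientedEdge G => f.1 = (e.1.2, e.1.1))) := by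
    rw [disjoint_filter]
    intro f _ h1 h2
    rw [h2] at h1
    exact G.ne_of_adj e.2 h1.symm
  rw [card_union_of_disjoint hdisj] at hsplit
  have hc1 : (univ.filter (fun f : OrientedEdge G => f.1.1 = e.1.1)).card = G.degree e.1.1 := by
    rw [← SimpleGraph.card_neighborFinset_eq_degree]
    apply card_bij (fun f _ => f.1.2)
    · intro f hf
      rw [mem_filter] at hf
      rw [SimpleGraph.mem_neighborFinset, ← hf.2]
      exact f.2
    · intro f hf g hg hfg
      rw [mem_filter] at hf hg
      exact Subtype.ext (Prod.ext_iff.mpr ⟨hf.2.trans hg.2.symm, hfg⟩)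
    · intro w hw
      rw [SimpleGraph.mem_neighborFinset] at hw
      exact ⟨⟨(e.1.1, w), hw⟩, mem_filter.mpr ⟨mem_univ _, rfl⟩, rfl⟩
  have hc2 : (univ.filter (fun f : OrientedEdge G => f.1 = (e.1.2, e.1.1))).card = 1 := by
    rw [card_eq_one]
    refine ⟨⟨(e.1.2, e.1.1), e.2.symm⟩, ?_⟩
    ext f
    simp only [mem_filter, mem_univ, true_and, mem_singleton]
    exact ⟨fun hh => Subtype.ext hh, fun hh => by rw [hh]⟩
  rw [hc1, hc2] at hsplit
  exact hsplit
end




lemma twoArrowAcyclic {α : Type*} (a b c d : α) (hab : a ≠ b) (hcd : c ≠ d)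
    (hac : a ≠ c) (hrev : ¬(a = d ∧ b = c)) (v : α) :
    ¬ Relation.TransGen (fun x y => (x = a ∧ y = b) ∨ (x = c ∧ y = d)) v v := by
  intro hvv
  have key : ∀ x y, Relation.TransGen (fun x y => (x = a ∧ y = b) ∨ (x = c ∧ y = d)) x y →
      ((x = a ∧ y = b) ∨ (x = c ∧ y = d)) ∨ (x = a ∧ y = d ∧ b = c) ∨ (x = c ∧ y = b ∧ d = a) := by
    intro x y hxy
    induction hxy with
    | single h => exact Or.inl h
    | tail h1 h2 ih =>
      rcases ih with (⟨rfl, rfl⟩ | ⟨rfl, rfl⟩) | ⟨rfl, rfl, hbc⟩ | ⟨rfl, rfl, hda⟩ <;>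
        rcases h2 with ⟨h2a, rfl⟩ | ⟨h2a, rfl⟩ <;> aesop
  rcases key v v hvv with (⟨rfl, h⟩ | ⟨rfl, h⟩) | ⟨rfl, h, hbc⟩ | ⟨rfl, h, hda⟩ <;> aesop

lemma pair_simplex {V : Type*} [DecidableEq V] (G : SimpleGraph V)
    (e f : OrientedEdge G) (hef : e ≠ f) :
    IsMorseSimplex G {e.1, f.1} ↔ Compat G e f := by
  constructor
  · rintro ⟨h1, h2, h3⟩
    constructor
    · intro hst
      exact hef (Subtype.ext (h2 e.1 (mem_insert_self _ _) f.1
        (mem_insert_of_mem (mem_singleton_self _)) hst))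
    · intro hswap
      apply h3 f.1.1
      refine Relation.TransGen.head (b := f.1.2) ?_ (Relation.TransGen.single ?_)
      · simp
      · simp only [mem_insert, mem_singleton]; left; exact hswap.symm
  · rintro ⟨h1, h2⟩
    refine ⟨?_, ?_, ?_⟩
    · intro p hp
      rcases mem_insert.mp hp with rfl | hp
      · exact e.2
      · rw [mem_singleton.mp hp]; exact f.2
    · intro p hp q hq hpq
      rcases mem_insert.mp hp with rfl | hp <;> rcases mem_insert.mp hq with rfl | hq
      · rfl
      · rw [mem_singleton.mp hq] at hpq ⊢; exact absurd hpq h1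
      · rw [mem_singleton.mp hp] at hpq ⊢; exact absurd hpq.symm h1
      · rw [mem_singleton.mp hp, mem_singleton.mp hq]
    · intro v hv
      apply twoArrowAcyclic e.1.1 e.1.2 f.1.1 f.1.2 (G.ne_of_adj e.2) (G.ne_of_adj f.2) h1
        (fun hh => h2 (by rw [Prod.ext_iff]; exact ⟨hh.1, hh.2⟩)) v
      refine Relation.TransGen.mono ?_ v v hv
      intro x y hxy
      simp only [mem_insert, mem_singleton, Prod.ext_iff] at hxy
      tauto

lemma morse_degree {V W : Type*} [Fintype V] [DecidableEq V] [Fintype W] [DecidableEq W]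
    (G : SimpleGraph V) (G' : SimpleGraph W) [DecidableRel G.Adj] [DecidableRel G'.Adj]
    (F : OrientedEdge G ≃ OrientedEdge G')
    (hF : ∀ S : Finset (OrientedEdge G),
      IsMorseSimplex G (S.image Subtype.val) ↔
        IsMorseSimplex G' ((S.image F).image Subtype.val))
    (e : OrientedEdge G) :
    G'.degree ((F e).1.1) = G.degree e.1.1 := by
  classical
  have hcards : Fintype.card (OrientedEdge G) = Fintype.card (OrientedEdge G') :=
    Fintype.card_congr F
  have hcompat : ∀ e f : OrientedEdge G, e ≠ f → (Compat G e f ↔ Compat G' (F e) (F f)) := by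
    intro e f hef
    have h1 := pair_simplex G e f hef
    have h2 := pair_simplex G' (F e) (F f) (fun hh => hef (F.injective hh))
    have h3 := hF {e, f}
    rw [Finset.image_insert, Finset.image_singleton, Finset.image_insert,
      Finset.image_singleton, Finset.image_insert, Finset.image_singleton] at h3
    exact h1.symm.trans (h3.trans h2)
  have hcardeq : (univ.filter (fun f : OrientedEdge G => f ≠ e ∧ Compat G e f)).card
      = (univ.filter (fun f : OrientedEdge G' => f ≠ F e ∧ Compat G' (F e) f)).card := by
    apply card_bij (fun f _ => F f)
    · intro f hf
      rw [mem_filter] at hf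
      rw [mem_filter]
      exact ⟨mem_univ _, fun hh => hf.2.1 (F.injective hh), (hcompat e f (fun hh => hf.2.1 hh.symm)).mp hf.2.2⟩
    · intro f _ g _ hfg
      exact F.injective hfg
    · intro g hg
      rw [mem_filter] at hg
      refine ⟨F.symm g, ?_, (F.apply_symm_apply g).symm ▸ rfl⟩
      rw [mem_filter]
      have hne : e ≠ F.symm g := by
        intro hh
        apply hg.2.1
        rw [hh, F.apply_symm_apply]
      refine ⟨mem_univ _, fun hh => hne hh.symm, ?_⟩
      have := (hcompat e (F.symm g) hne).mpr
      rw [F.apply_symm_apply] at this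
      exact this hg.2.2
  have k1 := compat_count G e
  have k2 := compat_count G' (F e)
  omega

lemma cycle_of_two_regular {W : Type*} [Fintype W] [DecidableEq W] (G : SimpleGraph W)
    [DecidableRel G.Adj] {n : ℕ} (hn : 3 ≤ n) (hcard : Fintype.card W = n)
    (hconn : G.Connected) (hreg : ∀ w, G.degree w = 2) :
    Nonempty (G ≃g SimpleGraph.cycleGraph n) := by
  classical
  -- neighbor finset characterization
  have hNF : ∀ {a b c : W}, G.Adj b a → G.Adj b c → a ≠ c → G.neighborFinset b = {a, c} := by
    intro a b c h1 h2 hac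
    symm
    apply Finset.eq_of_subset_of_card_le
    · intro x hx
      rcases mem_insert.mp hx with rfl | hx
      · rwa [SimpleGraph.mem_neighborFinset]
      · rw [mem_singleton.mp hx, SimpleGraph.mem_neighborFinset]; exact h2
    · rw [SimpleGraph.card_neighborFinset_eq_degree, hreg, card_insert_of_notMem (by simp [hac]), card_singleton]
  have hadj_cases : ∀ {a b c x : W}, G.Adj b a → G.Adj b c → a ≠ c → G.Adj b x → x = a ∨ x = c := by
    intro a b c x h1 h2 hac hx
    have : x ∈ G.neighborFinset b := by rwa [SimpleGraph.mem_neighborFinset]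
    rw [hNF h1 h2 hac] at this
    simpa using this
  -- the step function
  have hex : ∀ p : OrientedEdge G, ∃ q : OrientedEdge G, q.1.1 = p.1.2 ∧ q.1.2 ≠ p.1.1 := by
    intro p
    have hmem : p.1.1 ∈ G.neighborFinset p.1.2 := by
      rw [SimpleGraph.mem_neighborFinset]; exact p.2.symm
    have hcard1 : ((G.neighborFinset p.1.2).erase p.1.1).card = 1 := by
      rw [card_erase_of_mem hmem, SimpleGraph.card_neighborFinset_eq_degree, hreg]
    obtain ⟨c, hc⟩ := card_eq_one.mp hcard1
    have hcmem : c ∈ (G.neighborFinset p.1.2).erase p.1.1 := hc ▸ mem_singleton_self c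
    rw [mem_erase, SimpleGraph.mem_neighborFinset] at hcmem
    exact ⟨⟨(p.1.2, c), hcmem.2⟩, rfl, hcmem.1⟩
  choose step hstep1 hstep2 using hex
  -- uniqueness
  have huniq : ∀ p q : OrientedEdge G, q.1.1 = p.1.2 → q.1.2 ≠ p.1.1 → q = step p := by
    intro p q h1 h2
    have hadjq : G.Adj p.1.2 q.1.2 := h1 ▸ q.2
    have hadjs : G.Adj p.1.2 (step p).1.2 := (hstep1 p) ▸ (step p).2
    have := hadj_cases (c := (step p).1.2) p.2.symm hadjs (Ne.symm (hstep2 p)) hadjq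
    rcases this with h | h
    · exact absurd h h2
    · exact Subtype.ext (Prod.ext (h1.trans (hstep1 p).symm) h)
  have hstep_inj : Function.Injective step := by
    intro p q hpq
    have h1 : p.1.2 = q.1.2 := by
      rw [← hstep1 p, ← hstep1 q, hpq]
    have hadjp : G.Adj p.1.2 p.1.1 := p.2.symm
    have hadjq : G.Adj p.1.2 q.1.1 := h1 ▸ q.2.symm
    have hadjs : G.Adj p.1.2 (step p).1.2 := (hstep1 p) ▸ (step p).2
    have := hadj_cases (a := (step p).1.2) hadjs hadjp (hstep2 p) hadjq
    rcases this with h | h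
    · exact absurd (by rw [← hpq, ← h]) (hstep2 q)
    · exact Subtype.ext (Prod.ext h.symm h1)
  -- swap
  have hkey : ∀ p : OrientedEdge G,
      step ⟨((step p).1.2, (step p).1.1), (step p).2.symm⟩ = ⟨(p.1.2, p.1.1), p.2.symm⟩ := by
    intro p
    symm
    apply huniq
    · exact (hstep1 p).symm
    · exact Ne.symm (hstep2 p)
  -- starting dart
  have hW : Nonempty W := by
    rw [← Fintype.card_pos_iff, hcard]; omega
  obtain ⟨w0⟩ := hW
  have : 0 < G.degree w0 := by rw [hreg]; omega
  obtain ⟨u0, hu0⟩ : ∃ u, G.Adj w0 u := by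
    have hpos : 0 < (G.neighborFinset w0).card := by
      rw [SimpleGraph.card_neighborFinset_eq_degree, hreg]; omega
    obtain ⟨u, hu⟩ := card_pos.mp hpos
    exact ⟨u, (SimpleGraph.mem_neighborFinset _ _ _).mp hu⟩
  set p0 : OrientedEdge G := ⟨(w0, u0), hu0⟩ with hp0
  set d : ℕ → OrientedEdge G := fun k => step^[k] p0 with hd
  have hdsucc : ∀ k, d (k+1) = step (d k) := fun k => Function.iterate_succ_apply' step k p0
  set v : ℕ → W := fun k => (d k).1.1 with hv
  have hdk : ∀ k, (d k).1 = (v k, v (k+1)) := by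
    intro k
    have : (d k).1.2 = v (k+1) := by rw [hv]; simp only; rw [hdsucc, hstep1]
    exact Prod.ext rfl this
  have hadjv : ∀ k, G.Adj (v k) (v (k+1)) := by
    intro k
    have := (d k).2
    rwa [hdk k] at this
  have hne2 : ∀ k, v (k+2) ≠ v k := by
    intro k
    have h1 : (d (k+1)).1 = (v (k+1), v (k+2)) := hdk (k+1)
    have h2 : (d (k+1)).1.2 ≠ (d k).1.1 := by rw [hdsucc]; exact hstep2 (d k)
    rw [h1] at h2
    exact h2
  -- periodicity
  have hexm : ∃ m, 0 < m ∧ d m = d 0 := by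
    obtain ⟨i, j, hij, hdij⟩ := Finite.exists_ne_map_eq_of_infinite d
    rcases Nat.lt_or_ge i j with h | h
    · refine ⟨j - i, by omega, ?_⟩
      have : step^[i] (d (j - i)) = step^[i] (d 0) := by
        rw [hd]
        simp only
        rw [← Function.iterate_add_apply, ← Function.iterate_add_apply]
        rw [show i + (j - i) = j by omega, Nat.add_zero]
        exact hdij.symm
      exact Function.Injective.iterate hstep_inj i this
    · have hij' : j < i := by omega
      refine ⟨i - j, by omega, ?_⟩
      have : step^[j] (d (i - j)) = step^[j] (d 0) := by
        rw [hd]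
        simp only
        rw [← Function.iterate_add_apply, ← Function.iterate_add_apply]
        rw [show j + (i - j) = i by omega, Nat.add_zero]
        exact hdij
      exact Function.Injective.iterate hstep_inj j this
  set m := Nat.find hexm with hm
  obtain ⟨hmpos, hdm⟩ : 0 < m ∧ d m = d 0 := Nat.find_spec hexm
  have hmin : ∀ k, 0 < k → k < m → d k ≠ d 0 := by
    intro k hk1 hk2 hdk0
    exact Nat.find_min hexm hk2 ⟨hk1, hdk0⟩
  have hper : ∀ k, d (k + m) = d k := by
    intro k
    rw [hd]
    simp only
    rw [Function.iterate_add_apply]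
    exact congrArg (step^[k]) hdm
  have hperq : ∀ q r, d (r + q * m) = d r := by
    intro q
    induction q with
    | zero => intro r; simp
    | succ t ih =>
      intro r
      rw [show r + (t+1)*m = (r + t*m) + m by ring, hper, ih]
  have hmod : ∀ k, d (k % m) = d k := by
    intro k
    conv_rhs => rw [← Nat.mod_add_div' k m]
    rw [hperq]
  have hcongrd : ∀ a b : ℕ, a % m = b % m → d a = d b := by
    intro a b hab
    rw [← hmod a, ← hmod b, hab]
  have hvmod : ∀ k, v (k % m) = v k := fun k => congrArg (fun p => p.1.1) (hmod k)
  -- neighbors along the walk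
  have hneighbors : ∀ k, G.neighborFinset (v (k+1)) = {v k, v (k+2)} :=
    fun k => hNF (hadjv k).symm (hadjv (k+1)) (Ne.symm (hne2 k))
  -- surjectivity
  have hsurj : ∀ u : W, ∃ k, v k = u := by
    have hstepmem : ∀ x y : W, G.Adj x y → (∃ k, v k = x) → ∃ k, v k = y := by
      rintro x y hxy ⟨k, rfl⟩
      have h1 : v k = v (k + m) := (congrArg (fun p => p.1.1) (hper k)).symm
      have h2 : k + m = (k + m - 1) + 1 := by omega
      have h3 : y ∈ G.neighborFinset (v ((k + m - 1) + 1)) := by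
        rw [← h2, ← h1, SimpleGraph.mem_neighborFinset]
        exact hxy
      rw [hneighbors] at h3
      rcases mem_insert.mp h3 with h | h
      · exact ⟨k + m - 1, h.symm⟩
      · exact ⟨k + m - 1 + 2, (mem_singleton.mp h).symm⟩
    have haux : ∀ (x u : W) (wk : G.Walk x u), (∃ k, v k = x) → ∃ k, v k = u := by
      intro x u wk
      induction wk with
      | nil => exact id
      | cons hab p ih => exact fun hx => ih (hstepmem _ _ hab hx)
    intro u
    obtain ⟨wk⟩ := hconn.preconnected (v 0) u
    exact haux _ _ wk ⟨0, rfl⟩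
  -- injectivity below m
  have hinj : ∀ i j, i < j → j < m → v i ≠ v j := by
    intro i j hij hjm hvij
    have hdji : d j ≠ d i := by
      intro hdd
      have h1 : step^[i] (d (j-i)) = step^[i] (d 0) := by
        rw [hd]
        simp only
        rw [← Function.iterate_add_apply, ← Function.iterate_add_apply,
          show i + (j-i) = j by omega, Nat.add_zero]
        exact hdd
      exact hmin (j-i) (by omega) (by omega) (Function.Injective.iterate hstep_inj i h1)
    have hvim : v (i + m) = v i := congrArg (fun p => p.1.1) (hper i)
    have heq1 : i + m - 1 + 1 = i + m := by omega
    have hnb : v (j+1) ∈ G.neighborFinset (v (i + m - 1 + 1)) := by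
      rw [heq1, hvim, hvij, SimpleGraph.mem_neighborFinset]
      exact hadjv j
    rw [hneighbors] at hnb
    rcases mem_insert.mp hnb with hcase | hcase
    swap
    · -- v (j+1) = v (i+1) : then d j = d i, contradiction
      rw [mem_singleton] at hcase
      have heq2 : i + m - 1 + 2 = (i+1) + m := by omega
      have hvi1 : v ((i+1) + m) = v (i+1) := congrArg (fun p => p.1.1) (hper (i+1))
      rw [heq2, hvi1] at hcase
      apply hdji
      apply Subtype.ext
      rw [hdk j, hdk i, hvij, hcase]
    · -- the reversal case
      have hrev0 : d j = ⟨((d (i+m-1)).1.2, (d (i+m-1)).1.1), (d (i+m-1)).2.symm⟩ := by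
        apply Subtype.ext
        rw [hdk j]
        simp only [hdk (i+m-1)]
        rw [heq1]
        exact Prod.ext (hvij.symm.trans hvim.symm) hcase
      have hback : ∀ t, t ≤ i + m - 1 →
          d (j + t) = ⟨((d (i+m-1-t)).1.2, (d (i+m-1-t)).1.1), (d (i+m-1-t)).2.symm⟩ := by
        intro t
        induction t with
        | zero => intro _; simpa using hrev0
        | succ s ih =>
          intro hs
          have hs' : s ≤ i + m - 1 := by omega
          have h2 : i + m - 1 - s = (i + m - 1 - (s+1)) + 1 := by omega
          rw [show j + (s+1) = (j + s) + 1 by ring, hdsucc, ih hs', h2, hdsucc]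
          exact hkey (d (i + m - 1 - (s+1)))
      obtain ⟨t0, ht0⟩ := two_solvable m (i + 2*m - 1 - j)
      have htm : t0 % m < m := Nat.mod_lt _ (by omega)
      set t := t0 % m with htdef
      have h2t : 2 * t % m = 2 * t0 % m := Nat.ModEq.mul_left 2 (Nat.mod_modEq t0 m)
      set A := i + 2*m - 1 - j with hA
      set q := i + m - 1 - t with hq
      have hpq : q + 2*t + m = (j + t) + A := by omega
      have hdjt := hback t (by omega)
      have hmodm : ∀ x : ℕ, x + m ≡ x [MOD m] := fun x => Nat.add_mod_right x m
      rcases ht0 with hcase2 | hcase2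
      · -- 2t ≡ A : j + t ≡ q (mod m)
        have e1 : q + 2*t ≡ q + A [MOD m] := Nat.ModEq.add_left _ (h2t.trans hcase2)
        have e2 : (j + t) + A ≡ q + A [MOD m] := by
          calc (j + t) + A = q + 2*t + m := hpq.symm
            _ ≡ q + 2*t [MOD m] := hmodm _
            _ ≡ q + A [MOD m] := e1
        have e3 : (j + t) % m = q % m := Nat.ModEq.add_right_cancel' A e2
        have hdd : d (j + t) = d q := hcongrd _ _ e3
        have : (d q).1.1 = (d q).1.2 := by
          have := hdd.symm.trans hdjt
          exact (congrArg (fun r => r.1.2) this).symm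
        exact G.ne_of_adj (d q).2 this
      · -- 2t ≡ A + 1 : j + t ≡ q + 1 (mod m)
        have e1 : (q+1) + 2*t ≡ (q+1) + (A+1) [MOD m] := Nat.ModEq.add_left _ (h2t.trans hcase2)
        have e2 : (j + t) + (A+1) ≡ (q+1) + (A+1) [MOD m] := by
          calc (j + t) + (A+1) = (q+1) + 2*t + m := by omega
            _ ≡ (q+1) + 2*t [MOD m] := hmodm _
            _ ≡ (q+1) + (A+1) [MOD m] := e1
        have e3 : (j + t) % m = (q+1) % m := Nat.ModEq.add_right_cancel' (A+1) e2
        have hdd : d (j + t) = d (q+1) := hcongrd _ _ e3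
        have hfin : v (q+2) = v q := by
          have h5 := hdd.symm.trans hdjt
          have h6 := congrArg (fun r => r.1.2) h5
          simp only [hdk (q+1), hdk q] at h6
          exact h6
        exact hne2 q hfin
  have hminj : ∀ i j, i < m → j < m → v i = v j → i = j := by
    intro i j hi hj hvv
    by_contra hne
    rcases Nat.lt_or_ge i j with h | h
    · exact hinj i j h hj hvv
    · exact hinj j i (by omega) hi hvv.symm
  have hbij : Function.Bijective (fun k : Fin m => v k.val) := by
    constructor
    · intro a b hab
      exact Fin.ext (hminj _ _ a.isLt b.isLt hab)
    · intro u
      obtain ⟨k, hk⟩ := hsurj u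
      refine ⟨⟨k % m, Nat.mod_lt _ hmpos⟩, ?_⟩
      simp only
      rw [hvmod]
      exact hk
  have hmn : m = n := by
    rw [← hcard, ← Fintype.card_fin m]
    exact Fintype.card_of_bijective hbij
  subst hmn
  have hm2 : 2 ≤ m := by omega
  have hmaprel : ∀ a b : Fin m, G.Adj (v a.val) (v b.val) ↔ (SimpleGraph.cycleGraph m).Adj a b := by
    intro a b
    rw [SimpleGraph.cycleGraph_adj', fin_sub_one hm2 a b, fin_sub_one hm2 b a]
    constructor
    · intro hadj
      have h1 : v (a.val + m) = v a.val := congrArg (fun p => p.1.1) (hper a.val)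
      have heq1 : a.val + m - 1 + 1 = a.val + m := by omega
      have hnb : v b.val ∈ G.neighborFinset (v (a.val + m - 1 + 1)) := by
        rw [heq1, h1, SimpleGraph.mem_neighborFinset]
        exact hadj
      rw [hneighbors] at hnb
      have ham := a.isLt
      have hbm := b.isLt
      rcases mem_insert.mp hnb with hc | hc
      · have hbeq := hminj b.val ((a.val + m - 1) % m) hbm (Nat.mod_lt _ (by omega))
          (by rw [hvmod]; exact hc)
        rw [mod_small_cases m _ (by omega)] at hbeq
        split_ifs at hbeq <;> omega
      · have hsh : v ((a.val + 1) + m) = v (a.val + 1) := congrArg (fun p => p.1.1) (hper (a.val + 1))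
        rw [mem_singleton, show a.val + m - 1 + 2 = (a.val + 1) + m by omega, hsh] at hc
        have hbeq := hminj b.val ((a.val + 1) % m) hbm (Nat.mod_lt _ (by omega))
          (by rw [hvmod]; exact hc)
        rw [mod_small_cases m _ (by omega)] at hbeq
        split_ifs at hbeq <;> omega
    · intro hdisj
      have hv0 : v m = v 0 := congrArg (fun p => p.1.1) hdm
      have hlast : G.Adj (v (m-1)) (v m) := by
        have := hadjv (m-1)
        rwa [show m-1+1 = m by omega] at this
      rcases hdisj with (h | ⟨h1, h2⟩) | (h | ⟨h1, h2⟩)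
      · rw [h]; exact (hadjv b.val).symm
      · rw [h1, h2]; rw [hv0] at hlast; exact hlast.symm
      · rw [h]; exact hadjv a.val
      · rw [h1, h2]; rw [hv0] at hlast; exact hlast
  exact ⟨(SimpleGraph.Iso.symm ⟨Equiv.ofBijective _ hbij, hmaprel _ _⟩)⟩

/-- If `G` and `G'` are finite connected simple graphs with isomorphic discrete Morse
complexes and `G` is the cycle `C_n`, then `G'` is also isomorphic to `C_n`. -/
theorem stmt_5 {V W : Type*} [Fintype V] [DecidableEq V] [Fintype W] [DecidableEq W]
    (G : SimpleGraph V) (G' : SimpleGraph W) (hG : G.Connected) (hG' : G'.Connected)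
    (h : MorseEquiv G G') (n : ℕ) (hn : 3 ≤ n)
    (hcyc : Nonempty (G ≃g SimpleGraph.cycleGraph n)) :
    Nonempty (G' ≃g SimpleGraph.cycleGraph n) := by
  classical
  obtain ⟨F, hF⟩ := h
  obtain ⟨iso⟩ := hcyc
  letI : DecidableRel G.Adj := Classical.decRel _
  letI : DecidableRel G'.Adj := Classical.decRel _
  have hcardV : Fintype.card V = n := by
    rw [← Fintype.card_fin n]
    exact Fintype.card_congr iso.toEquiv
  have hdegG : ∀ x : V, G.degree x = 2 := by
    intro x
    obtain ⟨k, hk⟩ : ∃ k, n = k + 3 := ⟨n - 3, by omega⟩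
    subst hk
    rw [← SimpleGraph.card_neighborSet_eq_degree,
      Fintype.card_congr (iso.mapNeighborSet x),
      SimpleGraph.card_neighborSet_eq_degree,
      SimpleGraph.cycleGraph_degree_three_le]
  have hcardD : Fintype.card (OrientedEdge G) = 2 * n := by
    have e : OrientedEdge G ≃ G.Dart :=
      { toFun := fun p => ⟨p.1, p.2⟩
        invFun := fun dd => ⟨dd.toProd, dd.adj⟩
        left_inv := fun p => rfl
        right_inv := fun dd => rfl }
    rw [Fintype.card_congr e, SimpleGraph.dart_card_eq_sum_degrees,
      Finset.sum_congr rfl (fun x _ => hdegG x), Finset.sum_const, Finset.card_univ,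
      hcardV, smul_eq_mul, mul_comm]
  have hcardD' : Fintype.card (OrientedEdge G') = 2 * n := by
    rw [← Fintype.card_congr F]
    exact hcardD
  have hdeg' : ∀ e' : OrientedEdge G', G'.degree e'.1.1 = 2 := by
    intro e'
    have hh := morse_degree G G' F hF (F.symm e')
    rw [F.apply_symm_apply] at hh
    rw [hh, hdegG]
  have hdegW : ∀ w : W, G'.degree w = 2 := by
    intro w
    have hDne : Nonempty (OrientedEdge G') := by
      rw [← Fintype.card_pos_iff, hcardD']
      omega
    obtain ⟨e0⟩ := hDne
    by_cases hw : w = e0.1.1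
    · rw [hw]; exact hdeg' e0
    · obtain ⟨wk⟩ := hG'.preconnected w e0.1.1
      cases wk with
      | nil => exact absurd rfl hw
      | cons hadj p => exact hdeg' ⟨(w, _), hadj⟩
  have hcardW : Fintype.card W = n := by
    have e : OrientedEdge G' ≃ G'.Dart :=
      { toFun := fun p => ⟨p.1, p.2⟩
        invFun := fun dd => ⟨dd.toProd, dd.adj⟩
        left_inv := fun p => rfl
        right_inv := fun dd => rfl }
    have h1 := hcardD'
    rw [Fintype.card_congr e, SimpleGraph.dart_card_eq_sum_degrees,
      Finset.sum_congr rfl (fun x _ => hdegW x), Finset.sum_const, Finset.card_univ,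
      smul_eq_mul] at h1
    omega
  exact cycle_of_two_regular G' hn hcardW hG' hdegW
end

section
/- Two finite connected simple graphs G and G' are isomorphic if and only if their discrete Morse complexes 𝔐(G) and 𝔐(G') are isomorphic simplicial complexes. -/
namespace Stmt8Aux

set_option linter.unusedSectionVars false

variable {V : Type*} [DecidableEq V] {G : SimpleGraph V}

def src (e : OrientedEdge G) : V := e.1.1
def tgt (e : OrientedEdge G) : V := e.1.2
def rev (e : OrientedEdge G) : OrientedEdge G := ⟨(e.1.2, e.1.1), e.2.symm⟩

@[simp] lemma src_rev (e : OrientedEdge G) : src (rev e) = tgt e := rfl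
@[simp] lemma tgt_rev (e : OrientedEdge G) : tgt (rev e) = src e := rfl
@[simp] lemma rev_rev (e : OrientedEdge G) : rev (rev e) = e := rfl

lemma src_ne_tgt (e : OrientedEdge G) : src e ≠ tgt e := e.2.ne

lemma rev_ne (e : OrientedEdge G) : rev e ≠ e := by
  intro h
  have : src (rev e) = src e := by rw [h]
  exact (src_ne_tgt e) (by simpa using this.symm)

lemma rev_inj {e f : OrientedEdge G} (h : rev e = rev f) : e = f := by
  have := congrArg rev h; simpa using this

lemma rev_eq_iff {e f : OrientedEdge G} : f = rev e ↔ e = rev f := by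
  constructor <;> (intro h; subst h; simp)

def Perp (e f : OrientedEdge G) : Prop := e ≠ f ∧ (src e = src f ∨ f = rev e)

lemma Perp.symm {e f : OrientedEdge G} (h : Perp e f) : Perp f e := by
  obtain ⟨hne, h⟩ := h
  exact ⟨hne.symm, h.imp Eq.symm rev_eq_iff.mp⟩

lemma perp_comm {e f : OrientedEdge G} : Perp e f ↔ Perp f e := ⟨Perp.symm, Perp.symm⟩

/-- acyclicity for a single oriented edge -/
lemma transGen_single {e : V × V} (he : e.1 ≠ e.2) (v : V) :
    ¬ Relation.TransGen (fun a b => (a, b) ∈ ({e} : Finset (V × V))) v v := by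
  obtain ⟨e1, e2⟩ := e
  simp only [ne_eq] at he
  intro h
  have key : ∀ a b, Relation.TransGen (fun a b => (a, b) ∈ ({(e1, e2)} : Finset (V × V))) a b →
      a = e1 ∧ b = e2 := by
    intro a b h
    induction h with
    | single h =>
      simp only [Finset.mem_singleton, Prod.mk.injEq] at h
      exact h
    | tail _ h ih =>
      simp only [Finset.mem_singleton, Prod.mk.injEq] at h
      exact absurd (ih.2.symm.trans h.1) (fun h => he h.symm)
  obtain ⟨h1, h2⟩ := key v v h
  exact he (h1.symm.trans h2)

/-- acyclicity for two oriented edges with distinct sources, not reverses of each other -/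
lemma transGen_pair {e f : V × V} (he : e.1 ≠ e.2) (hf : f.1 ≠ f.2)
    (h1 : e.1 ≠ f.1) (h2 : f ≠ (e.2, e.1)) (v : V) :
    ¬ Relation.TransGen (fun a b => (a, b) ∈ ({e, f} : Finset (V × V))) v v := by
  obtain ⟨e1, e2⟩ := e
  obtain ⟨f1, f2⟩ := f
  simp only [ne_eq, Prod.mk.injEq, not_and] at he hf h1 h2
  intro h
  have key : ∀ a b,
      Relation.TransGen (fun a b => (a, b) ∈ ({(e1, e2), (f1, f2)} : Finset (V × V))) a b →
      ((a = e1 ∧ b = e2) ∨ (a = f1 ∧ b = f2) ∨ (a = e1 ∧ b = f2 ∧ e2 = f1) ∨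
        (a = f1 ∧ b = e2 ∧ f2 = e1)) := by
    intro a b h
    induction h with
    | single h =>
      simp only [Finset.mem_insert, Finset.mem_singleton, Prod.mk.injEq] at h
      exact h.imp id Or.inl
    | @tail b c _ h ih =>
      simp only [Finset.mem_insert, Finset.mem_singleton, Prod.mk.injEq] at h
      rcases ih with ⟨ha, hb⟩ | ⟨ha, hb⟩ | ⟨ha, hb, hef⟩ | ⟨ha, hb, hfe⟩
      · rcases h with ⟨hb', hc⟩ | ⟨hb', hc⟩
        · exact absurd (hb.symm.trans hb') (fun h => he h.symm)
        · exact Or.inr (Or.inr (Or.inl ⟨ha, hc, hb.symm.trans hb'⟩))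
      · rcases h with ⟨hb', hc⟩ | ⟨hb', hc⟩
        · exact Or.inr (Or.inr (Or.inr ⟨ha, hc, hb.symm.trans hb'⟩))
        · exact absurd (hb'.symm.trans hb) hf
      · rcases h with ⟨hb', hc⟩ | ⟨hb', hc⟩
        · exact absurd (hb.symm.trans hb') (h2 hef.symm)
        · exact absurd (hb.symm.trans hb') (fun h => hf h.symm)
      · rcases h with ⟨hb', hc⟩ | ⟨hb', hc⟩
        · exact absurd (hb.symm.trans hb') (fun h => he h.symm)
        · exact absurd hfe (h2 (hb.symm.trans hb').symm)
  rcases key v v h with ⟨ha, hb⟩ | ⟨ha, hb⟩ | ⟨ha, hb, hef⟩ | ⟨ha, hb, hfe⟩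
  · exact he (ha.symm.trans hb)
  · exact hf (ha.symm.trans hb)
  · exact (h2 hef.symm) (hb.symm.trans ha)
  · exact (h2 (ha.symm.trans hb)) hfe

lemma image_pair (e f : OrientedEdge G) :
    (({e, f} : Finset (OrientedEdge G)).image Subtype.val) = {e.1, f.1} := by
  simp

lemma pair_simplex_iff {e f : OrientedEdge G} (hne : e ≠ f) :
    IsMorseSimplex G (({e, f} : Finset (OrientedEdge G)).image Subtype.val) ↔ ¬ Perp e f := by
  rw [image_pair]
  have hne1 : e.1 ≠ f.1 := fun h => hne (Subtype.ext h)
  constructor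
  · rintro ⟨-, hdist, hacyc⟩ ⟨-, hsrc | hrev⟩
    · exact hne (Subtype.ext (hdist e.1 (by simp) f.1 (by simp) hsrc))
    · refine hacyc (src e) ?_
      refine Relation.TransGen.tail (b := tgt e) (Relation.TransGen.single ?_) ?_
      · show ((src e, tgt e) ∈ ({e.1, f.1} : Finset (V × V)))
        simp [src, tgt]
      · show ((tgt e, src e) ∈ ({e.1, f.1} : Finset (V × V)))
        have : f.1 = (tgt e, src e) := by rw [hrev]; rfl
        simp [this]
  · intro hnp
    have hps : src e ≠ src f ∧ f ≠ rev e := by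
      constructor
      · intro h; exact hnp ⟨hne, Or.inl h⟩
      · intro h; exact hnp ⟨hne, Or.inr h⟩
    refine ⟨?_, ?_, ?_⟩
    · intro p hp
      rcases Finset.mem_insert.mp hp with h | h
      · exact h ▸ e.2
      · exact (Finset.mem_singleton.mp h) ▸ f.2
    · intro p hp q hq h
      rcases Finset.mem_insert.mp hp with h1 | h1 <;>
        rcases Finset.mem_insert.mp hq with h2 | h2 <;>
          (try rw [Finset.mem_singleton] at h1) <;>
          (try rw [Finset.mem_singleton] at h2) <;> subst h1 <;> subst h2
      · rfl
      · exact absurd h hps.1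
      · exact absurd h.symm hps.1
      · rfl
    · intro v
      refine transGen_pair e.2.ne f.2.ne hps.1 ?_ v
      intro h
      exact hps.2 (Subtype.ext h)

section transfer

variable {W : Type*} [DecidableEq W] {G' : SimpleGraph W}

lemma perp_pres (F : OrientedEdge G ≃ OrientedEdge G')
    (hF : ∀ S : Finset (OrientedEdge G),
      IsMorseSimplex G (S.image Subtype.val) ↔
        IsMorseSimplex G' ((S.image F).image Subtype.val))
    (e f : OrientedEdge G) : Perp e f ↔ Perp (F e) (F f) := by
  by_cases hef : e = f
  · subst hef
    constructor <;> (intro h; exact absurd rfl h.1)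
  · have hFef : F e ≠ F f := fun h => hef (F.injective h)
    have h := hF {e, f}
    rw [show ({e, f} : Finset (OrientedEdge G)).image F = {F e, F f} by simp] at h
    rw [pair_simplex_iff hef, pair_simplex_iff hFef] at h
    exact not_iff_not.mp h

def MP (e f : OrientedEdge G) : Prop := Perp e f ∧ ∀ g, ¬ (Perp g e ∧ Perp g f)

lemma mp_pres (F : OrientedEdge G ≃ OrientedEdge G')
    (hP : ∀ e f, Perp e f ↔ Perp (F e) (F f))
    (e f : OrientedEdge G) : MP e f ↔ MP (F e) (F f) := by
  unfold MP
  rw [← hP e f]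
  refine and_congr_right fun _ => ?_
  constructor
  · intro h g' hg'
    exact h (F.symm g') (by rw [hP, hP (F.symm g') f, F.apply_symm_apply]; exact hg')
  · intro h g hg
    exact h (F g) (by rw [← hP, ← hP g f]; exact hg)

lemma mp_rev (e : OrientedEdge G) : MP e (rev e) := by
  refine ⟨⟨(rev_ne e).symm, Or.inr rfl⟩, ?_⟩
  rintro g ⟨⟨hg1, hg2⟩, ⟨hg3, hg4⟩⟩
  rcases hg2 with h | h <;> rcases hg4 with h' | h'
  · exact src_ne_tgt e (h.symm.trans h')
  · exact hg1 (rev_inj h').symm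
  · exact hg3 (rev_eq_iff.mpr h)
  · exact hg3 (rev_eq_iff.mpr h)

end transfer

lemma walk_closure {S : Set V} (hcl : ∀ u ∈ S, ∀ v, G.Adj u v → v ∈ S) :
    ∀ {a b : V} (_ : G.Walk a b), a ∈ S → b ∈ S := by
  intro a b p
  induction p with
  | nil => exact id
  | cons h _ ih => exact fun ha => ih (hcl _ ha _ h)

lemma closure_eq_univ (hc : G.Connected) {S : Set V}
    (hcl : ∀ u ∈ S, ∀ v, G.Adj u v → v ∈ S) {x : V} (hx : x ∈ S) (v : V) : v ∈ S := by
  obtain ⟨p⟩ := hc.preconnected x v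
  exact walk_closure hcl p hx

def TwoOut (G : SimpleGraph V) (v : V) : Prop :=
  ∃ a b : OrientedEdge G, a ≠ b ∧ src a = v ∧ src b = v ∧
    ∀ c : OrientedEdge G, src c = v → c = a ∨ c = b

lemma propagation (hc : G.Connected) (N : OrientedEdge G → OrientedEdge G)
    (hinv : ∀ e, N (N e) = e) (hM : ∀ e, MP e (N e))
    {e0 : OrientedEdge G} (h0 : N e0 ≠ rev e0) : ∀ v : V, TwoOut G v := by
  have hQne : ∀ e, e ≠ N e := fun e => (hM e).1.1
  have hQsrc : ∀ e, N e ≠ rev e → src (N e) = src e := by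
    intro e hQ
    rcases (hM e).1.2 with h | h
    · exact h.symm
    · exact absurd h hQ
  have hq2 : ∀ e, N e ≠ rev e → ∀ c, src c = src e → c = e ∨ c = N e := by
    intro e hQ c hcsrc
    by_contra hcon
    push_neg at hcon
    exact (hM e).2 c ⟨⟨hcon.1, Or.inl hcsrc⟩,
      ⟨hcon.2, Or.inl (hcsrc.trans (hQsrc e hQ).symm)⟩⟩
  have htwo : ∀ e, N e ≠ rev e → TwoOut G (src e) := by
    intro e hQ
    exact ⟨e, N e, hQne e, rfl, hQsrc e hQ, hq2 e hQ⟩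
  have hstep1 : ∀ e, N e ≠ rev e → N (rev e) ≠ e := by
    intro e hQ h
    apply hQ
    have := congrArg N h
    rw [hinv] at this
    exact this.symm
  have hstepQ : ∀ e, N e ≠ rev e → N (N (rev e)) ≠ rev (N (rev e)) := by
    intro e hQ
    rw [hinv]
    intro h
    exact hstep1 e hQ (rev_inj h).symm
  have hstep2 : ∀ e, N e ≠ rev e → src (N (rev e)) = tgt e := by
    intro e hQ
    have := hQsrc (rev e) (by rw [rev_rev]; exact hstep1 e hQ)
    rwa [src_rev] at this
  -- the two sequences
  set stp : OrientedEdge G → OrientedEdge G := fun g => N (rev g) with hstp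
  set f : ℕ → OrientedEdge G := fun n => stp^[n] e0 with hf
  set g : ℕ → OrientedEdge G := fun n => stp^[n] (N e0) with hg
  have hfs : ∀ n, f (n + 1) = N (rev (f n)) := by
    intro n
    show stp^[n+1] e0 = N (rev (stp^[n] e0))
    rw [Function.iterate_succ_apply']
  have hgs : ∀ n, g (n + 1) = N (rev (g n)) := by
    intro n
    show stp^[n+1] (N e0) = N (rev (stp^[n] (N e0)))
    rw [Function.iterate_succ_apply']
  have hQf : ∀ n, N (f n) ≠ rev (f n) := by
    intro n
    induction n with
    | zero => exact h0
    | succ m ih => rw [hfs m]; exact hstepQ (f m) ih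
  have hQg : ∀ n, N (g n) ≠ rev (g n) := by
    intro n
    induction n with
    | zero =>
      show N (N e0) ≠ rev (N e0)
      rw [hinv]
      intro h
      exact h0 (rev_eq_iff.mp h)
    | succ m ih => rw [hgs m]; exact hstepQ (g m) ih
  have hsrcf : ∀ n, src (f (n + 1)) = tgt (f n) := fun n => by
    rw [hfs n]; exact hstep2 (f n) (hQf n)
  have hsrcg : ∀ n, src (g (n + 1)) = tgt (g n) := fun n => by
    rw [hgs n]; exact hstep2 (g n) (hQg n)
  set B : Set V := {v | ∃ n, src (f n) = v ∨ src (g n) = v} with hB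
  have hcl : ∀ u ∈ B, ∀ v, G.Adj u v → v ∈ B := by
    rintro u ⟨n, hn | hn⟩ v hadj
    · -- u = src (f n)
      have hc' : src (⟨(u, v), hadj⟩ : OrientedEdge G) = src (f n) := hn.symm
      rcases hq2 (f n) (hQf n) _ hc' with h | h
      · refine ⟨n + 1, Or.inl ?_⟩
        rw [hsrcf n, ← h]; rfl
      · cases n with
        | zero =>
          refine ⟨1, Or.inr ?_⟩
          rw [hsrcg 0]
          have : tgt (g 0) = v := by rw [show g 0 = N (f 0) from rfl, ← h]; rfl
          exact this
        | succ m =>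
          refine ⟨m, Or.inl ?_⟩
          have hNf : N (f (m + 1)) = rev (f m) := by rw [hfs m, hinv]
          have : tgt (N (f (m+1))) = v := by rw [← h]; rfl
          rw [hNf] at this
          rw [← this]; rfl
    · have hc' : src (⟨(u, v), hadj⟩ : OrientedEdge G) = src (g n) := hn.symm
      rcases hq2 (g n) (hQg n) _ hc' with h | h
      · refine ⟨n + 1, Or.inr ?_⟩
        rw [hsrcg n, ← h]; rfl
      · cases n with
        | zero =>
          refine ⟨1, Or.inl ?_⟩
          rw [hsrcf 0]
          have : tgt (f 0) = v := by
            rw [show f 0 = N (g 0) from (hinv e0).symm, ← h]; rfl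
          exact this
        | succ m =>
          refine ⟨m, Or.inr ?_⟩
          have hNg : N (g (m + 1)) = rev (g m) := by rw [hgs m, hinv]
          have : tgt (N (g (m+1))) = v := by rw [← h]; rfl
          rw [hNg] at this
          rw [← this]; rfl
  have hBuniv : ∀ v, v ∈ B := closure_eq_univ hc hcl ⟨0, Or.inl rfl⟩
  intro v
  rcases hBuniv v with ⟨n, hn | hn⟩
  · exact hn ▸ htwo (f n) (hQf n)
  · exact hn ▸ htwo (g n) (hQg n)

section cyc

variable (two : ∀ v : V, TwoOut G v)
include two

lemma sib_exists (e : OrientedEdge G) :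
    ∃ f, f ≠ e ∧ src f = src e ∧ ∀ c, src c = src e → c = e ∨ c = f := by
  obtain ⟨a, b, hab, ha, hb, hall⟩ := two (src e)
  rcases hall e rfl with he | he
  · subst he
    exact ⟨b, fun h => hab h.symm, hb.trans ha.symm, fun c hc => hall c (hc.trans ha)⟩
  · subst he
    exact ⟨a, hab, ha.trans hb.symm, fun c hc => (hall c (hc.trans hb)).symm⟩

noncomputable def sib (e : OrientedEdge G) : OrientedEdge G := (sib_exists two e).choose

lemma sib_ne (e : OrientedEdge G) : sib two e ≠ e := (sib_exists two e).choose_spec.1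

lemma sib_src (e : OrientedEdge G) : src (sib two e) = src e :=
  (sib_exists two e).choose_spec.2.1

lemma sib_all (e : OrientedEdge G) : ∀ c, src c = src e → c = e ∨ c = sib two e :=
  (sib_exists two e).choose_spec.2.2

lemma sib_sib (e : OrientedEdge G) : sib two (sib two e) = e := by
  rcases sib_all two (sib two e) e (sib_src two e).symm with h | h
  · exact absurd h.symm (sib_ne two e)
  · exact h.symm

noncomputable def nxt (e : OrientedEdge G) : OrientedEdge G := sib two (rev e)

lemma src_nxt (e : OrientedEdge G) : src (nxt two e) = tgt e := by
  rw [nxt, sib_src, src_rev]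

lemma sib_nxt (e : OrientedEdge G) : sib two (nxt two e) = rev e := sib_sib two (rev e)

lemma nxt_rev_nxt (e : OrientedEdge G) : nxt two (rev (nxt two e)) = rev e := by
  rw [nxt, rev_rev, sib_nxt]

lemma nxt_ne_rev (e : OrientedEdge G) : nxt two e ≠ rev e := sib_ne two (rev e)

lemma nxt_inj {a b : OrientedEdge G} (h : nxt two a = nxt two b) : a = b := by
  have h1 : rev a = rev b := by
    rw [← nxt_rev_nxt two a, h, nxt_rev_nxt two b]
  exact rev_inj h1

lemma nbr_cases (e : OrientedEdge G) {u : V} (h : G.Adj (src e) u) :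
    u = tgt e ∨ u = tgt (sib two e) := by
  rcases sib_all two e ⟨(src e, u), h⟩ rfl with h' | h'
  · exact Or.inl (congrArg tgt h')
  · exact Or.inr (congrArg tgt h')

lemma norev (e : OrientedEdge G) (k : ℕ) : (nxt two)^[k] e ≠ rev e := by
  intro h
  have key : ∀ j, j ≤ k → rev ((nxt two)^[j] e) = (nxt two)^[k - j] e := by
    intro j
    induction j with
    | zero => exact fun _ => h.symm
    | succ j ih =>
      intro hjk
      have IH := ih (Nat.le_of_succ_le hjk)
      have h1 : nxt two (rev ((nxt two)^[j+1] e)) = rev ((nxt two)^[j] e) := by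
        rw [Function.iterate_succ_apply']
        exact nxt_rev_nxt two ((nxt two)^[j] e)
      have h2 : (nxt two)^[k - j] e = nxt two ((nxt two)^[k - (j+1)] e) := by
        rw [show k - j = (k - (j+1)) + 1 from by omega, Function.iterate_succ_apply']
      rw [IH, h2] at h1
      exact nxt_inj two h1
  rcases Nat.even_or_odd k with ⟨m, hm⟩ | ⟨m, hm⟩
  · have := key m (by omega)
    rw [show k - m = m by omega] at this
    exact rev_ne _ this
  · have := key m (by omega)
    rw [show k - m = m + 1 by omega, Function.iterate_succ_apply'] at this
    exact nxt_ne_rev two _ this.symm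

lemma exists_periodic [Fintype V] (e0 : OrientedEdge G) :
    ∃ (eb : OrientedEdge G) (d : ℕ), 0 < d ∧ (nxt two)^[d] eb = eb := by
  have : ¬ Function.Injective (fun n : ℕ => (nxt two)^[n] e0) := by
    intro hinj
    haveI : Infinite (OrientedEdge G) := Infinite.of_injective _ hinj
    exact not_finite (OrientedEdge G)
  rw [Function.not_injective_iff] at this
  obtain ⟨x, y, hxy, hne⟩ := this
  rcases hne.lt_or_gt with hlt | hlt
  · refine ⟨(nxt two)^[x] e0, y - x, by omega, ?_⟩
    rw [← Function.iterate_add_apply, show y - x + x = y from by omega, hxy]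
  · refine ⟨(nxt two)^[y] e0, x - y, by omega, ?_⟩
    rw [← Function.iterate_add_apply, show x - y + y = x from by omega, hxy.symm]

lemma cycle_enum [Fintype V] (hc : G.Connected) :
    ∃ (w : ℕ → V), (∀ i, w (i + Fintype.card V) = w i) ∧
      (∀ i, G.Adj (w i) (w (i + 1))) ∧
      (∀ i j, i < Fintype.card V → j < Fintype.card V → w i = w j → i = j) ∧
      (∀ v, ∃ i, i < Fintype.card V ∧ w i = v) ∧
      (∀ i u, G.Adj (w i) u → u = w (i + 1) ∨ u = w (i + (Fintype.card V - 1))) := by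
  classical
  obtain ⟨v0⟩ := hc.nonempty
  obtain ⟨a, b, hab, ha, hb, hall⟩ := two v0
  obtain ⟨eb, d, hd, hper⟩ := exists_periodic two a
  have hex : ∃ m, 0 < m ∧ (nxt two)^[m] eb = eb := ⟨d, hd, hper⟩
  set m := Nat.find hex with hmdef
  obtain ⟨hm0, hmper⟩ := Nat.find_spec hex
  have hmin : ∀ k, k < m → ¬ (0 < k ∧ (nxt two)^[k] eb = eb) := fun k hk => Nat.find_min hex hk
  set w : ℕ → V := fun i => src ((nxt two)^[i] eb) with hw
  -- periodicity of the edge orbit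
  have horb_per : ∀ i, (nxt two)^[i + m] eb = (nxt two)^[i] eb := by
    intro i
    rw [Function.iterate_add_apply, hmper]
  have hWper : ∀ i, w (i + m) = w i := fun i => congrArg src (horb_per i)
  have hWmul : ∀ q i, w (i + m * q) = w i := by
    intro q
    induction q with
    | zero => simp
    | succ q ih =>
      intro i
      have : i + m * (q + 1) = (i + m * q) + m := by ring
      rw [this, hWper, ih]
  have hWmod : ∀ k, w (k % m) = w k := by
    intro k
    conv_rhs => rw [show k = k % m + m * (k / m) from (Nat.mod_add_div k m).symm]
    rw [hWmul]
  have horb_mul : ∀ q i, (nxt two)^[i + m * q] eb = (nxt two)^[i] eb := by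
    intro q
    induction q with
    | zero => simp
    | succ q ih =>
      intro i
      have : i + m * (q + 1) = (i + m * q) + m := by ring
      rw [this, horb_per, ih]
  -- orbit elements are pairwise distinct
  have hOrb : ∀ i j, i < m → j < m → (nxt two)^[i] eb = (nxt two)^[j] eb → i = j := by
    have key : ∀ i j, i < m → j < m → i < j → (nxt two)^[i] eb ≠ (nxt two)^[j] eb := by
      intro i j hi hj hij heq
      have h1 : (nxt two)^[m - j + i] eb = eb := by
        have := congrArg (nxt two)^[m - j] heq
        rw [← Function.iterate_add_apply, ← Function.iterate_add_apply,
          show m - j + j = m from by omega, hmper] at this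
        rw [Function.iterate_add_apply] at this ⊢
        exact this
      exact hmin (m - j + i) (by omega) ⟨by omega, h1⟩
    intro i j hi hj heq
    rcases lt_trichotomy i j with h | h | h
    · exact absurd heq (key i j hi hj h)
    · exact h
    · exact absurd heq.symm (key j i hj hi h)
  -- the sibling of an orbit edge is the reverse of the previous orbit edge
  have hsib_orbit : ∀ i, sib two ((nxt two)^[i] eb) = rev ((nxt two)^[i + m - 1] eb) := by
    intro i
    have h1 : nxt two ((nxt two)^[i + m - 1] eb) = (nxt two)^[i] eb := by
      have h0 : nxt two ((nxt two)^[i + m - 1] eb) = (nxt two)^[(i + m - 1) + 1] eb :=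
        (Function.iterate_succ_apply' _ _ _).symm
      rw [h0, show i + m - 1 + 1 = i + m from by omega, horb_per]
    rw [← h1, sib_nxt]
  -- injectivity of w on [0, m)
  have hWinj : ∀ i j, i < m → j < m → w i = w j → i = j := by
    have key : ∀ i j, i < m → j < m → i < j → w i = w j → False := by
      intro i j hi hj hij heq
      set f := (nxt two)^[i] eb with hfdef
      set g := (nxt two)^[j] eb with hgdef
      have hfg : f ≠ g := fun h => absurd (hOrb i j hi hj h) (by omega)
      have hgs : g = sib two f := by
        rcases sib_all two f g heq.symm with h | h
        · exact absurd h hfg.symm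
        · exact h
      have : g = rev ((nxt two)^[i + m - 1] eb) := by rw [hgs, hsib_orbit]
      have h2 : (nxt two)^[i + m - 1 - j] g = rev g := by
        have h3 : (nxt two)^[i + m - 1 - j] g = (nxt two)^[i + m - 1] eb := by
          rw [hgdef, ← Function.iterate_add_apply]
          congr 1
          omega
        rw [h3, this, rev_rev]
      exact norev two g _ h2
    intro i j hi hj heq
    rcases lt_trichotomy i j with h | h | h
    · exact absurd heq fun heq => key i j hi hj h heq
    · exact h
    · exact absurd heq.symm fun heq => key j i hj hi h heq
  -- neighbours of w i
  have hnbr : ∀ i u, G.Adj (w i) u → u = w (i + 1) ∨ u = w (i + (m - 1)) := by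
    intro i u hadj
    rcases nbr_cases two ((nxt two)^[i] eb) hadj with h | h
    · left
      rw [h, hw]
      show tgt _ = src ((nxt two)^[i+1] eb)
      rw [Function.iterate_succ_apply', src_nxt]
    · right
      rw [h, hsib_orbit, tgt_rev, hw]
      show src _ = src ((nxt two)^[i + (m-1)] eb)
      congr 2
      omega
  -- covering
  have hcover : ∀ v, ∃ i, w i = v := by
    have hclosed : ∀ u ∈ {v | ∃ i, w i = v}, ∀ v, G.Adj u v → v ∈ {v | ∃ i, w i = v} := by
      rintro u ⟨i, rfl⟩ v hadj
      rcases hnbr i v hadj with h | h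
      · exact ⟨i + 1, h.symm⟩
      · exact ⟨i + (m - 1), h.symm⟩
    exact fun v => closure_eq_univ hc hclosed ⟨0, rfl⟩ v
  have hcover' : ∀ v, ∃ i, i < m ∧ w i = v := by
    intro v
    obtain ⟨i, hi⟩ := hcover v
    exact ⟨i % m, Nat.mod_lt _ hm0, by rw [hWmod]; exact hi⟩
  -- m = card V
  have hbij : Function.Bijective (fun i : Fin m => w i) := by
    constructor
    · intro i j h
      exact Fin.ext (hWinj i j i.isLt j.isLt h)
    · intro v
      obtain ⟨i, hi, hwi⟩ := hcover' v
      exact ⟨⟨i, hi⟩, hwi⟩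
  have hcard : Fintype.card V = m := by
    rw [← Fintype.card_fin m]
    exact (Fintype.card_of_bijective hbij).symm
  rw [hcard]
  exact ⟨w, hWper, fun i => by
    have : w (i+1) = tgt ((nxt two)^[i] eb) := by
      rw [hw]
      show src ((nxt two)^[i+1] eb) = _
      rw [Function.iterate_succ_apply', src_nxt]
    rw [this]
    exact ((nxt two)^[i] eb).2, hWinj, hcover', hnbr⟩

end cyc

lemma per_mod {α : Type*} {w : ℕ → α} {n : ℕ} (per : ∀ i, w (i + n) = w i) :
    ∀ k, w (k % n) = w k := by
  have hWmul : ∀ q i, w (i + n * q) = w i := by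
    intro q
    induction q with
    | zero => simp
    | succ q ih =>
      intro i
      have : i + n * (q + 1) = (i + n * q) + n := by ring
      rw [this, per, ih]
  intro k
  conv_rhs => rw [show k = k % n + n * (k / n) from (Nat.mod_add_div k n).symm]
  rw [hWmul]

lemma enum_adj_iff {w : ℕ → V} {n : ℕ} (hn : 0 < n)
    (per : ∀ i, w (i + n) = w i) (adj1 : ∀ i, G.Adj (w i) (w (i + 1)))
    (inj : ∀ i j, i < n → j < n → w i = w j → i = j)
    (nbhd : ∀ i u, G.Adj (w i) u → u = w (i + 1) ∨ u = w (i + (n - 1)))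
    {i j : ℕ} (hi : i < n) (hj : j < n) :
    G.Adj (w i) (w j) ↔ (j = (i + 1) % n ∨ i = (j + 1) % n) := by
  constructor
  · intro h
    rcases nbhd i (w j) h with h' | h'
    · left
      exact inj j ((i + 1) % n) hj (Nat.mod_lt _ hn) (by rw [per_mod per]; exact h')
    · right
      have hj' : j = (i + (n - 1)) % n :=
        inj j ((i + (n - 1)) % n) hj (Nat.mod_lt _ hn) (by rw [per_mod per]; exact h')
      rw [hj']
      rw [Nat.mod_add_mod, show i + (n - 1) + 1 = i + n from by omega,
        Nat.add_mod_right, Nat.mod_eq_of_lt hi]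
  · intro h
    rcases h with h | h
    · rw [h, per_mod per]
      exact adj1 i
    · rw [h, per_mod per]
      exact (adj1 j).symm

lemma cyc_iso {W : Type*} [DecidableEq W] [Fintype V] [Fintype W] {G' : SimpleGraph W}
    (hc : G.Connected) (hc' : G'.Connected)
    (two : ∀ v : V, TwoOut G v) (two' : ∀ x : W, TwoOut G' x)
    (hcard : Fintype.card V = Fintype.card W) : Nonempty (G ≃g G') := by
  obtain ⟨w, per, adj1, inj, cover, nbhd⟩ := cycle_enum two hc
  obtain ⟨w', per', adj1', inj', cover', nbhd'⟩ := cycle_enum two' hc'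
  rw [← hcard] at per' inj' cover' nbhd'
  set n := Fintype.card V with hn
  have hn0 : 0 < n := by
    haveI := hc.nonempty
    exact Fintype.card_pos
  have bG : Function.Bijective (fun i : Fin n => w i) := by
    constructor
    · intro i j h
      exact Fin.ext (inj i j i.isLt j.isLt h)
    · intro v
      obtain ⟨i, hi, hwi⟩ := cover v
      exact ⟨⟨i, hi⟩, hwi⟩
  have bG' : Function.Bijective (fun i : Fin n => w' i) := by
    constructor
    · intro i j h
      exact Fin.ext (inj' i j i.isLt j.isLt h)
    · intro v
      obtain ⟨i, hi, hwi⟩ := cover' v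
      exact ⟨⟨i, hi⟩, hwi⟩
  set eG := Equiv.ofBijective _ bG with heG
  set eG' := Equiv.ofBijective _ bG' with heG'
  refine ⟨⟨eG.symm.trans eG', ?_⟩⟩
  intro a b
  have ha : w (eG.symm a).1 = a := eG.apply_symm_apply a
  have hb : w (eG.symm b).1 = b := eG.apply_symm_apply b
  show G'.Adj (w' (eG.symm a).1) (w' (eG.symm b).1) ↔ G.Adj a b
  have key := (enum_adj_iff hn0 per' adj1' inj' nbhd' (eG.symm a).isLt (eG.symm b).isLt).trans
    (enum_adj_iff hn0 per adj1 inj nbhd (eG.symm a).isLt (eG.symm b).isLt).symm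
  rw [ha, hb] at key
  exact key

lemma count_edges [Fintype V] (two : ∀ v : V, TwoOut G v) :
    Nat.card (OrientedEdge G) = 2 * Fintype.card V := by
  classical
  have two' : ∀ v : V, ∃ a b : OrientedEdge G, a ≠ b ∧ src a = v ∧ src b = v ∧
      ∀ c : OrientedEdge G, src c = v → c = a ∨ c = b := two
  choose A B hAB hA hB hall using two'
  set f : V × Bool → OrientedEdge G := fun p => if p.2 then A p.1 else B p.1 with hf
  have hbij : Function.Bijective f := by
    constructor
    · rintro ⟨v, c⟩ ⟨v', c'⟩ h
      have hsrc : v = v' := by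
        have h1 : src (f (v, c)) = v := by
          cases c <;> simp [hf, hA, hB]
        have h2 : src (f (v', c')) = v' := by
          cases c' <;> simp [hf, hA, hB]
        rw [← h1, ← h2, h]
      subst hsrc
      cases c <;> cases c' <;> simp [hf] at h ⊢
      · exact absurd h.symm (hAB v)
      · exact absurd h (hAB v)
    · intro e
      rcases hall (src e) e rfl with h | h
      · exact ⟨(src e, true), h.symm⟩
      · exact ⟨(src e, false), h.symm⟩
  have := Nat.card_congr (Equiv.ofBijective f hbij)
  rw [Nat.card_prod, Nat.card_eq_fintype_card, Nat.card_eq_fintype_card (α := Bool)] at this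
  rw [← this]
  simp [Fintype.card_bool]
  ring

lemma exists_src_all (hc : G.Connected) (hne : Nonempty (OrientedEdge G)) :
    ∀ v : V, ∃ e : OrientedEdge G, src e = v := by
  obtain ⟨e0⟩ := hne
  have aux : ∀ {a b : V} (_ : G.Walk a b), (∃ e : OrientedEdge G, src e = a) →
      ∃ e : OrientedEdge G, src e = b := by
    intro a b p
    induction p with
    | nil => exact id
    | @cons u x y h q ih => exact fun _ => ih ⟨⟨(x, u), h.symm⟩, rfl⟩
  intro v
  obtain ⟨p⟩ := hc.preconnected (src e0) v
  exact aux p ⟨e0, rfl⟩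

lemma recon {W : Type*} [DecidableEq W] {G' : SimpleGraph W}
    (hc : G.Connected) (hc' : G'.Connected)
    (F : OrientedEdge G ≃ OrientedEdge G')
    (hP : ∀ e f, Perp e f ↔ Perp (F e) (F f))
    (hcomm : ∀ e, F (rev e) = rev (F e))
    (hne : Nonempty (OrientedEdge G)) : Nonempty (G ≃g G') := by
  have hne' : Nonempty (OrientedEdge G') := ⟨F hne.some⟩
  have hcomm' : ∀ f, F.symm (rev f) = rev (F.symm f) := by
    intro f
    apply F.injective
    rw [Equiv.apply_symm_apply, hcomm, Equiv.apply_symm_apply]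
  have hP' : ∀ a b : OrientedEdge G', Perp (F.symm a) (F.symm b) ↔ Perp a b := by
    intro a b
    rw [hP, Equiv.apply_symm_apply, Equiv.apply_symm_apply]
  have key : ∀ e f : OrientedEdge G, src e = src f → src (F e) = src (F f) := by
    intro e f h
    by_cases hef : e = f
    · rw [hef]
    · rcases (hP e f).mp ⟨hef, Or.inl h⟩ with ⟨hne2, h' | h'⟩
      · exact h'
      · exfalso
        rw [← hcomm] at h'
        have hfe : f = rev e := F.injective h'
        rw [hfe, src_rev] at h
        exact src_ne_tgt e h
  have key' : ∀ e f : OrientedEdge G', src e = src f → src (F.symm e) = src (F.symm f) := by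
    intro e f h
    by_cases hef : e = f
    · rw [hef]
    · rcases (hP' e f).mpr ⟨hef, Or.inl h⟩ with ⟨hne2, h' | h'⟩
      · exact h'
      · exfalso
        rw [← hcomm'] at h'
        have hfe : f = rev e := F.symm.injective h'
        rw [hfe, src_rev] at h
        exact src_ne_tgt e h
  choose eV hEV using exists_src_all hc hne
  choose eW hEW using exists_src_all hc' hne'
  set φ : V → W := fun v => src (F (eV v)) with hφ
  set ψ : W → V := fun x => src (F.symm (eW x)) with hψ
  have hφe : ∀ e : OrientedEdge G, φ (src e) = src (F e) := fun e =>
    key (eV (src e)) e (hEV _)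
  have hψf : ∀ f : OrientedEdge G', ψ (src f) = src (F.symm f) := fun f =>
    key' (eW (src f)) f (hEW _)
  have hl : ∀ v, ψ (φ v) = v := by
    intro v
    show ψ (src (F (eV v))) = v
    rw [hψf (F (eV v)), Equiv.symm_apply_apply, hEV]
  have hr : ∀ x, φ (ψ x) = x := by
    intro x
    show φ (src (F.symm (eW x))) = x
    rw [hφe (F.symm (eW x)), Equiv.apply_symm_apply, hEW]
  have fwd : ∀ a b, G.Adj a b → G'.Adj (φ a) (φ b) := by
    intro a b h
    have h1 : φ a = src (F ⟨(a, b), h⟩) := hφe ⟨(a, b), h⟩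
    have h2 : φ b = src (F (rev ⟨(a, b), h⟩)) := hφe (rev ⟨(a, b), h⟩)
    rw [h1, h2, hcomm, src_rev]
    exact (F ⟨(a, b), h⟩).2
  have bwd : ∀ x y, G'.Adj x y → G.Adj (ψ x) (ψ y) := by
    intro x y h
    have h1 : ψ x = src (F.symm ⟨(x, y), h⟩) := hψf ⟨(x, y), h⟩
    have h2 : ψ y = src (F.symm (rev ⟨(x, y), h⟩)) := hψf (rev ⟨(x, y), h⟩)
    rw [h1, h2, hcomm', src_rev]
    exact (F.symm ⟨(x, y), h⟩).2
  refine ⟨⟨⟨φ, ψ, hl, hr⟩, ?_⟩⟩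
  intro a b
  show G'.Adj (φ a) (φ b) ↔ G.Adj a b
  constructor
  · intro h
    have h2 := bwd _ _ h
    rwa [hl, hl] at h2
  · exact fwd a b

lemma empty_iso {W : Type*} [DecidableEq W] {G' : SimpleGraph W}
    (hc : G.Connected) (hc' : G'.Connected)
    (hE : IsEmpty (OrientedEdge G)) (hE' : IsEmpty (OrientedEdge G')) :
    Nonempty (G ≃g G') := by
  have hnadj : ∀ a b : V, ¬ G.Adj a b := fun a b h => hE.false ⟨(a, b), h⟩
  have hnadj' : ∀ a b : W, ¬ G'.Adj a b := fun a b h => hE'.false ⟨(a, b), h⟩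
  have hsub : ∀ a b : V, a = b := by
    intro a b
    obtain ⟨p⟩ := hc.preconnected a b
    cases p with
    | nil => rfl
    | cons h _ => exact absurd h (hnadj _ _)
  have hsub' : ∀ a b : W, a = b := by
    intro a b
    obtain ⟨p⟩ := hc'.preconnected a b
    cases p with
    | nil => rfl
    | cons h _ => exact absurd h (hnadj' _ _)
  obtain ⟨v0⟩ := hc.nonempty
  obtain ⟨x0⟩ := hc'.nonempty
  exact ⟨⟨⟨fun _ => x0, fun _ => v0, fun v => hsub _ _, fun x => hsub' _ _⟩,
    fun {a b} => iff_of_false (hnadj' _ _) (hnadj _ _)⟩⟩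

section forward

variable {W : Type*} [DecidableEq W] {G' : SimpleGraph W}

lemma morse_transfer (φ : G ≃g G') {T : Finset (V × V)} (h : IsMorseSimplex G T) :
    IsMorseSimplex G' (T.image (fun p => (φ p.1, φ p.2))) := by
  obtain ⟨h1, h2, h3⟩ := h
  refine ⟨?_, ?_, ?_⟩
  · intro p hp
    obtain ⟨q, hq, rfl⟩ := Finset.mem_image.mp hp
    exact φ.map_adj_iff.mpr (h1 q hq)
  · intro p hp q hq heq
    obtain ⟨p', hp', rfl⟩ := Finset.mem_image.mp hp
    obtain ⟨q', hq', rfl⟩ := Finset.mem_image.mp hq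
    have : p'.1 = q'.1 := φ.toEquiv.injective heq
    rw [h2 p' hp' q' hq' this]
  · intro v hv
    apply h3 (φ.symm v)
    refine Relation.TransGen.lift (fun x => φ.symm x) ?_ _ _ hv
    intro x y hxy
    obtain ⟨q, hq, hq2⟩ := Finset.mem_image.mp hxy
    simp only [Prod.mk.injEq] at hq2
    have hx : q.1 = φ.symm x := by
      rw [← hq2.1]
      exact (φ.toEquiv.symm_apply_apply q.1).symm
    have hy : q.2 = φ.symm y := by
      rw [← hq2.2]
      exact (φ.toEquiv.symm_apply_apply q.2).symm
    show (φ.symm x, φ.symm y) ∈ T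
    rw [show (φ.symm x, φ.symm y) = q from Prod.ext hx.symm hy.symm]
    exact hq

lemma morse_transfer_iff (φ : G ≃g G') (T : Finset (V × V)) :
    IsMorseSimplex G T ↔ IsMorseSimplex G' (T.image (fun p => (φ p.1, φ p.2))) := by
  constructor
  · exact morse_transfer φ
  · intro h
    have h2 := morse_transfer φ.symm h
    rw [Finset.image_image] at h2
    have heq : T.image ((fun p : W × W => (φ.symm p.1, φ.symm p.2)) ∘
        fun p : V × V => (φ p.1, φ p.2)) = T := by
      have hcg : ∀ p ∈ T, ((fun p : W × W => (φ.symm p.1, φ.symm p.2)) ∘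
          fun p : V × V => (φ p.1, φ p.2)) p = id p := by
        intro p _
        simp [Function.comp]
      rw [Finset.image_congr hcg, Finset.image_id]
    rwa [heq] at h2

lemma iso_to_morse (φ : G ≃g G') : MorseEquiv G G' := by
  classical
  set F : OrientedEdge G ≃ OrientedEdge G' :=
    { toFun := fun e => ⟨(φ e.1.1, φ e.1.2), φ.map_adj_iff.mpr e.2⟩
      invFun := fun f => ⟨(φ.symm f.1.1, φ.symm f.1.2), φ.symm.map_adj_iff.mpr f.2⟩
      left_inv := by
        intro e
        apply Subtype.ext
        apply Prod.ext <;> simp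
      right_inv := by
        intro f
        apply Subtype.ext
        apply Prod.ext <;> simp } with hF
  refine ⟨F, fun S => ?_⟩
  have himg : ((S.image F).image Subtype.val) =
      (S.image Subtype.val).image (fun p => (φ p.1, φ p.2)) := by
    rw [Finset.image_image, Finset.image_image]
    rfl
  rw [himg]
  exact morse_transfer_iff φ _

end forward

end Stmt8Aux

/-- Two finite connected simple graphs are isomorphic if and only if their discrete
Morse complexes are isomorphic simplicial complexes. -/
theorem stmt_8 {V W : Type*} [Fintype V] [DecidableEq V] [Fintype W] [DecidableEq W]
    (G : SimpleGraph V) (G' : SimpleGraph W) (hG : G.Connected) (hG' : G'.Connected) :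
    Nonempty (G ≃g G') ↔ MorseEquiv G G' := by
  open Stmt8Aux in
  constructor
  · rintro ⟨φ⟩
    exact Stmt8Aux.iso_to_morse φ
  · rintro ⟨F, hF⟩
    classical
    by_cases hE : IsEmpty (OrientedEdge G)
    · have hE' : IsEmpty (OrientedEdge G') := ⟨fun f => hE.false (F.symm f)⟩
      exact Stmt8Aux.empty_iso hG hG' hE hE'
    · have hne : Nonempty (OrientedEdge G) := not_isEmpty_iff.mp hE
      have hP := Stmt8Aux.perp_pres F hF
      by_cases hcomm : ∀ e, F (Stmt8Aux.rev e) = Stmt8Aux.rev (F e)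
      · exact Stmt8Aux.recon hG hG' F hP hcomm hne
      · push_neg at hcomm
        obtain ⟨e1, he1⟩ := hcomm
        have hMPpres := Stmt8Aux.mp_pres F hP
        set N : OrientedEdge G → OrientedEdge G :=
          fun e => F.symm (Stmt8Aux.rev (F e)) with hN
        have hNinv : ∀ e, N (N e) = e := by
          intro e
          show F.symm (Stmt8Aux.rev (F (F.symm (Stmt8Aux.rev (F e))))) = e
          rw [Equiv.apply_symm_apply, Stmt8Aux.rev_rev, Equiv.symm_apply_apply]
        have hNmp : ∀ e, Stmt8Aux.MP e (N e) := by
          intro e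
          have h2 : Stmt8Aux.MP (F e) (F (N e)) := by
            rw [show F (N e) = Stmt8Aux.rev (F e) from Equiv.apply_symm_apply _ _]
            exact Stmt8Aux.mp_rev (F e)
          exact (hMPpres e (N e)).mpr h2
        have hN1 : N e1 ≠ Stmt8Aux.rev e1 := by
          intro h
          apply he1
          have h2 := congrArg F h
          rw [Equiv.apply_symm_apply] at h2
          exact h2.symm
        have twoG : ∀ v, Stmt8Aux.TwoOut G v :=
          Stmt8Aux.propagation hG N hNinv hNmp hN1
        set N' : OrientedEdge G' → OrientedEdge G' :=
          fun f => F (Stmt8Aux.rev (F.symm f)) with hN'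
        have hN'inv : ∀ f, N' (N' f) = f := by
          intro f
          show F (Stmt8Aux.rev (F.symm (F (Stmt8Aux.rev (F.symm f))))) = f
          rw [Equiv.symm_apply_apply, Stmt8Aux.rev_rev, Equiv.apply_symm_apply]
        have hN'mp : ∀ f, Stmt8Aux.MP f (N' f) := by
          intro f
          have h2 := (hMPpres (F.symm f) (Stmt8Aux.rev (F.symm f))).mp
            (Stmt8Aux.mp_rev (F.symm f))
          rw [Equiv.apply_symm_apply] at h2
          exact h2
        have hN'1 : N' (F e1) ≠ Stmt8Aux.rev (F e1) := by
          show F (Stmt8Aux.rev (F.symm (F e1))) ≠ Stmt8Aux.rev (F e1)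
          rw [Equiv.symm_apply_apply]
          exact he1
        have twoG' : ∀ x, Stmt8Aux.TwoOut G' x :=
          Stmt8Aux.propagation hG' N' hN'inv hN'mp hN'1
        have hcnt : Fintype.card V = Fintype.card W := by
          have h1 := Stmt8Aux.count_edges twoG
          have h2 := Stmt8Aux.count_edges twoG'
          have h3 : Nat.card (OrientedEdge G) = Nat.card (OrientedEdge G') :=
            Nat.card_congr F
          omega
        exact Stmt8Aux.cyc_iso hG hG' twoG twoG' hcnt
end

section
/- Let G be a finite connected multigraph with at least 3 vertices. Two distinct oriented edges (v,e), (v',e') of G are parallel (meaning v = v' and e, e' have the same endpoints) if and only if they are incompatible in 𝔐(G) (do not span an edge of 𝔐(G)) and lk((v,e), 𝔐(G)) = lk((v',e'), 𝔐(G)). -/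
/-- A multigraph: a set of vertices `V`, a set of edges `E`, and a map assigning to
each edge an unordered pair of distinct endpoints (no loops). -/
structure Multigraph (V E : Type*) where
  ends : E → Sym2 V
  not_isDiag : ∀ e, ¬ (ends e).IsDiag

/-- The underlying simple graph (simplification) of a multigraph: `u` and `w` are
adjacent iff some edge of `G` has endpoints `{u, w}`. -/
def Multigraph.toSimple {V E : Type*} (G : Multigraph V E) : SimpleGraph V where
  Adj u w := u ≠ w ∧ ∃ e, G.ends e = s(u, w)
  symm := by
    constructor
    rintro u w ⟨h, e, he⟩
    exact ⟨h.symm, e, by rw [he, Sym2.eq_swap]⟩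
  loopless := ⟨fun u h => h.1 rfl⟩

/-- A multigraph is connected iff its underlying simple graph is. -/
def Multigraph.Connected {V E : Type*} (G : Multigraph V E) : Prop :=
  G.toSimple.Connected

/-- `S` is a simplex of the discrete Morse complex `𝔐(G)` of the multigraph `G`
(an acyclic matching): a set of oriented edges `(v, e)` with `v` an endpoint of `e`,
no two sharing their source vertex, no edge used twice, and no directed cycle
(directed 2-cycles through parallel edges included). -/
def IsMorseSimplexM {V E : Type*} (G : Multigraph V E) (S : Finset (V × E)) : Prop :=
  (∀ p ∈ S, p.1 ∈ G.ends p.2) ∧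
  (∀ p ∈ S, ∀ q ∈ S, p.1 = q.1 → p = q) ∧
  (∀ p ∈ S, ∀ q ∈ S, p.2 = q.2 → p = q) ∧
  (∀ v : V, ¬ Relation.TransGen
    (fun a b => ∃ e, (a, e) ∈ S ∧ G.ends e = s(a, b)) v v)

/-- The discrete Morse complex `𝔐(G)` of a multigraph, as a family of finite sets. -/
def MCpxM {V E : Type*} (G : Multigraph V E) : Set (Finset (V × E)) :=
  {S | IsMorseSimplexM G S}

/-- The link of a vertex `p` (an oriented edge of `G`) in `𝔐(G)`. -/
def lkM {V E : Type*} [DecidableEq V] [DecidableEq E] (G : Multigraph V E)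
    (p : V × E) : Set (Finset (V × E)) :=
  {S | p ∉ S ∧ insert p S ∈ MCpxM G}

section Aux

lemma no_loop_of_rank {V : Type*} (r : V → V → Prop) (ρ : V → ℕ)
    (h : ∀ a b, r a b → ρ a < ρ b) : ∀ x, ¬ Relation.TransGen r x x := by
  have key : ∀ x y, Relation.TransGen r x y → ρ x < ρ y := by
    intro x y h'
    induction h' with
    | single h'' => exact h _ _ h''
    | tail _ h'' ih => exact ih.trans (h _ _ h'')
  exact fun x hx => lt_irrefl _ (key x x hx)

/-- The other endpoint of an edge relative to a known endpoint. -/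
lemma other_endpoint {V E : Type*} (G : Multigraph V E) {v : V} {e : E}
    (hv : v ∈ G.ends e) : ∃ u, G.ends e = s(v, u) ∧ u ≠ v := by
  obtain ⟨u, hu⟩ := Sym2.mem_iff_exists.mp hv
  refine ⟨u, hu, fun h => G.not_isDiag e ?_⟩
  rw [hu, Sym2.mk_isDiag_iff]
  exact h.symm

/-- Determine the target from source: if `ends f = s(a, ta)` with `ta ≠ a`, and
`ends f = s(a, b)`, then `b = ta`. -/
lemma target_unique {V : Type*} {a ta b : V} (hta : ta ≠ a)
    (h : s(a, ta) = s(a, b)) : b = ta := by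
  rcases Sym2.eq_iff.mp h with ⟨_, h'⟩ | ⟨h', h''⟩
  · exact h'.symm
  · exact absurd h'' hta

lemma two_simplex {V E : Type*} [DecidableEq V] [DecidableEq E] (G : Multigraph V E)
    (a b : V) (f g : E) (ta tb : V)
    (hfa : G.ends f = s(a, ta)) (hgb : G.ends g = s(b, tb))
    (hab : a ≠ b) (hfg : f ≠ g) (hta : ta ≠ a) (htb : tb ≠ b)
    (ρ : V → ℕ) (h1 : ρ a < ρ ta) (h2 : ρ b < ρ tb) :
    ({(a, f), (b, g)} : Finset (V × E)) ∈ MCpxM G := by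
  have hmem : ∀ p : V × E, p ∈ ({(a, f), (b, g)} : Finset (V × E)) ↔
      p = (a, f) ∨ p = (b, g) := by intro p; simp
  refine ⟨?_, ?_, ?_, ?_⟩
  · intro p hp
    rcases (hmem p).mp hp with h | h <;> subst h
    · rw [hfa]; exact Sym2.mem_mk_left a ta
    · rw [hgb]; exact Sym2.mem_mk_left b tb
  · intro p hp q hq hpq
    rcases (hmem p).mp hp with h | h <;> rcases (hmem q).mp hq with h' | h' <;>
      subst h <;> subst h'
    · rfl
    · exact absurd hpq hab
    · exact absurd hpq hab.symm
    · rfl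
  · intro p hp q hq hpq
    rcases (hmem p).mp hp with h | h <;> rcases (hmem q).mp hq with h' | h' <;>
      subst h <;> subst h'
    · rfl
    · exact absurd hpq hfg
    · exact absurd hpq hfg.symm
    · rfl
  · apply no_loop_of_rank _ ρ
    rintro c d ⟨e0, h0, hend⟩
    rcases (hmem (c, e0)).mp h0 with h | h <;>
      rw [Prod.mk.injEq] at h <;> obtain ⟨rfl, rfl⟩ := h
    · have := target_unique hta (hfa.symm.trans hend)
      rw [this]; exact h1
    · have := target_unique htb (hgb.symm.trans hend)
      rw [this]; exact h2

/-- A walk from outside `T` into `T` crosses the boundary. -/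
lemma walk_crossing {V : Type*} {H : SimpleGraph V} (T : Set V) :
    ∀ {a b : V}, H.Walk a b → a ∉ T → b ∈ T →
      ∃ w x, w ∉ T ∧ x ∈ T ∧ H.Adj w x := by
  intro a b p
  induction p with
  | nil => intro h h'; exact absurd h' h
  | @cons u c b h p ih =>
    intro ha hb
    by_cases hcT : c ∈ T
    · exact ⟨u, c, ha, hcT, h⟩
    · exact ih hcT hb

lemma exists_crossing {V E : Type*} [Fintype V] (G : Multigraph V E)
    (hc : G.Connected) (h3 : 3 ≤ Fintype.card V) (v v' : V) :
    ∃ w f, w ≠ v ∧ w ≠ v' ∧ (G.ends f = s(v, w) ∨ G.ends f = s(v', w)) := by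
  classical
  have hthird : ∃ u : V, u ≠ v ∧ u ≠ v' := by
    by_contra h
    push_neg at h
    have hsub : (Finset.univ : Finset V) ⊆ {v, v'} := by
      intro u _
      simp only [Finset.mem_insert, Finset.mem_singleton]
      rcases eq_or_ne u v with h' | h'
      · exact Or.inl h'
      · exact Or.inr (h u h')
    have hcard := Finset.card_le_card hsub
    have h2 : ({v, v'} : Finset V).card ≤ 2 := by
      refine (Finset.card_insert_le _ _).trans ?_
      simp
    rw [Finset.card_univ] at hcard
    omega
  obtain ⟨u, huv, huv'⟩ := hthird
  obtain ⟨p⟩ := hc.preconnected u v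
  obtain ⟨w, x, hwT, hxT, hwx⟩ := walk_crossing ({v, v'} : Set V) p
    (by simp [huv, huv']) (by simp)
  obtain ⟨hne, f, hf⟩ := hwx
  have hw1 : w ≠ v := fun h => hwT (by simp [h])
  have hw2 : w ≠ v' := fun h => hwT (by simp [h])
  rcases hxT with rfl | rfl
  · exact ⟨w, f, hw1, hw2, Or.inl (hf.trans Sym2.eq_swap)⟩
  · exact ⟨w, f, hw1, hw2, Or.inr (hf.trans Sym2.eq_swap)⟩

/-- Forward direction: parallel oriented edges with the same tail have links
related by inclusion. -/
lemma link_subset_parallel {V E : Type*} [DecidableEq V] [DecidableEq E]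
    (G : Multigraph V E) (v : V) (e e' : E) (hv : v ∈ G.ends e)
    (hee : G.ends e = G.ends e') (hnee : e ≠ e') :
    lkM G (v, e) ⊆ lkM G (v, e') := by
  rintro S ⟨hpS, h1, h2, h3, h4⟩
  obtain ⟨u, hu, huv⟩ := other_endpoint G hv
  -- no element of S uses edge e
  have hnotE : ∀ w f, (w, f) ∈ S → f ≠ e := by
    intro w f hwf heq
    have := h3 (w, f) (Finset.mem_insert_of_mem hwf) (v, e) (Finset.mem_insert_self _ _) heq
    rw [this] at hwf
    exact hpS hwf
  -- no element of S uses edge e'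
  have hnotE' : ∀ w f, (w, f) ∈ S → f ≠ e' := by
    intro w f hwf heq
    have hw : w ∈ G.ends f := h1 (w, f) (Finset.mem_insert_of_mem hwf)
    rw [heq, ← hee, hu, Sym2.mem_iff] at hw
    rcases hw with rfl | rfl
    · have := h2 (w, f) (Finset.mem_insert_of_mem hwf) (w, e)
        (Finset.mem_insert_self _ _) rfl
      rw [Prod.mk.injEq] at this
      exact hnee (this.2.symm.trans heq)
    · -- directed 2-cycle v → w → v
      refine h4 v (Relation.TransGen.tail (b := w) (Relation.TransGen.single ?_) ?_)
      · exact ⟨e, Finset.mem_insert_self _ _, hu⟩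
      · exact ⟨f, Finset.mem_insert_of_mem hwf, by rw [heq, ← hee, hu, Sym2.eq_swap]⟩
  refine ⟨fun h => hnotE' v e' h rfl, ?_, ?_, ?_, ?_⟩
  · rintro ⟨w, f⟩ hwf
    rcases Finset.mem_insert.mp hwf with h | h
    · rw [Prod.mk.injEq] at h
      obtain ⟨rfl, rfl⟩ := h
      exact hee ▸ hv
    · exact h1 (w, f) (Finset.mem_insert_of_mem h)
  · rintro p hp q hq hpq
    rcases Finset.mem_insert.mp hp with h | h <;> rcases Finset.mem_insert.mp hq with h' | h'
    · rw [h, h']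
    · subst h
      have := h2 q (Finset.mem_insert_of_mem h') (v, e) (Finset.mem_insert_self _ _) hpq.symm
      rw [this] at h'
      exact absurd h' hpS
    · subst h'
      have := h2 p (Finset.mem_insert_of_mem h) (v, e) (Finset.mem_insert_self _ _) hpq
      rw [this] at h
      exact absurd h hpS
    · exact h2 p (Finset.mem_insert_of_mem h) q (Finset.mem_insert_of_mem h') hpq
  · rintro p hp q hq hpq
    rcases Finset.mem_insert.mp hp with h | h <;> rcases Finset.mem_insert.mp hq with h' | h'
    · rw [h, h']
    · subst h
      exact absurd hpq.symm (hnotE' q.1 q.2 (by rwa [Prod.mk.eta]))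
    · subst h'
      exact absurd hpq (hnotE' p.1 p.2 (by rwa [Prod.mk.eta]))
    · exact h3 p (Finset.mem_insert_of_mem h) q (Finset.mem_insert_of_mem h') hpq
  · have hrel : (fun a b => ∃ e0, (a, e0) ∈ insert (v, e') S ∧ G.ends e0 = s(a, b)) =
        (fun a b => ∃ e0, (a, e0) ∈ insert (v, e) S ∧ G.ends e0 = s(a, b)) := by
      funext a b
      apply propext
      constructor
      · rintro ⟨e0, h0, hend⟩
        rcases Finset.mem_insert.mp h0 with h | h
        · rw [Prod.mk.injEq] at h
          obtain ⟨rfl, rfl⟩ := h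
          exact ⟨e, Finset.mem_insert_self _ _, by rw [hee]; exact hend⟩
        · exact ⟨e0, Finset.mem_insert_of_mem h, hend⟩
      · rintro ⟨e0, h0, hend⟩
        rcases Finset.mem_insert.mp h0 with h | h
        · rw [Prod.mk.injEq] at h
          obtain ⟨rfl, rfl⟩ := h
          exact ⟨e', Finset.mem_insert_self _ _, by rw [← hee]; exact hend⟩
        · exact ⟨e0, Finset.mem_insert_of_mem h, hend⟩
    rw [hrel]
    exact h4

/-- Backward direction, case of equal source vertices: equal links force equal
endpoint pairs. -/
lemma same_source_case {V E : Type*} [DecidableEq V] [DecidableEq E]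
    (G : Multigraph V E) (v : V) (e e' : E) (hv : v ∈ G.ends e) (hv' : v ∈ G.ends e')
    (hnee : e ≠ e') (hlk : lkM G (v, e) = lkM G (v, e')) : G.ends e = G.ends e' := by
  by_contra hends
  obtain ⟨u, hu, huv⟩ := other_endpoint G hv
  obtain ⟨u', hu', hu'v⟩ := other_endpoint G hv'
  have huu' : u ≠ u' := by
    rintro rfl
    exact hends (hu.trans hu'.symm)
  have hS : ({(u', e')} : Finset (V × E)) ∈ lkM G (v, e) := by
    constructor
    · simp only [Finset.mem_singleton, Prod.mk.injEq, not_and]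
      intro h; exact absurd h.symm hu'v
    · show ({(v, e), (u', e')} : Finset (V × E)) ∈ MCpxM G
      refine two_simplex G v u' e e' u v hu (by rw [hu']; exact Sym2.eq_swap) (Ne.symm hu'v)
        hnee huv (Ne.symm hu'v) (fun x => if x = u' then 0 else if x = v then 1 else 2) ?_ ?_
      · simp [Ne.symm hu'v, huu', huv]
      · simp [Ne.symm hu'v]
  rw [hlk] at hS
  obtain ⟨-, -, -, h3, -⟩ := hS
  have := h3 (v, e') (Finset.mem_insert_self _ _)
    (u', e') (Finset.mem_insert_of_mem (Finset.mem_singleton_self _)) rfl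
  rw [Prod.mk.injEq] at this
  exact hu'v this.1.symm

/-- Backward direction, case of distinct sources with both oriented edges along the
same endpoint pair: impossible when links are equal (using a third vertex). -/
lemma not_parallel_case {V E : Type*} [Fintype V] [DecidableEq V] [DecidableEq E]
    (G : Multigraph V E) (hc : G.Connected) (h3 : 3 ≤ Fintype.card V)
    (v v' : V) (e e' : E)
    (hvv : v ≠ v') (he : G.ends e = s(v, v')) (he' : G.ends e' = s(v, v'))
    (hlk : lkM G (v, e) = lkM G (v', e')) : False := by
  obtain ⟨w, f, hw1, hw2, hf⟩ := exists_crossing G hc h3 v v'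
  rcases hf with hf | hf
  · -- edge f joins v and w : take S = {(v, f)}
    have hfe : ∀ g : E, G.ends g = s(v, v') → f ≠ g := by
      intro g hg h
      rw [h, hg] at hf
      rcases Sym2.eq_iff.mp hf with ⟨_, h'⟩ | ⟨h', _⟩
      · exact hw2 h'.symm
      · exact hw1 h'.symm
    have hS : ({(v, f)} : Finset (V × E)) ∈ lkM G (v', e') := by
      constructor
      · simp only [Finset.mem_singleton, Prod.mk.injEq, not_and]
        intro h; exact absurd h (Ne.symm hvv)
      · show ({(v', e'), (v, f)} : Finset (V × E)) ∈ MCpxM G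
        refine two_simplex G v' v e' f v w (he'.trans Sym2.eq_swap) hf (Ne.symm hvv)
          (Ne.symm (hfe e' he')) hvv hw1
          (fun y => if y = v' then 0 else if y = v then 1 else 2) ?_ ?_
        · simp [hvv]
        · simp [hvv, hw1, hw2]
    rw [← hlk] at hS
    obtain ⟨-, -, hcond2, -, -⟩ := hS
    have := hcond2 (v, e) (Finset.mem_insert_self _ _)
      (v, f) (Finset.mem_insert_of_mem (Finset.mem_singleton_self _)) rfl
    rw [Prod.mk.injEq] at this
    exact hfe e he this.2.symm
  · -- edge f joins v' and w : take S = {(v', f)}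
    have hfe : ∀ g : E, G.ends g = s(v, v') → f ≠ g := by
      intro g hg h
      rw [h, hg] at hf
      rcases Sym2.eq_iff.mp hf with ⟨h', _⟩ | ⟨h', _⟩
      · exact hvv h'
      · exact hw1 h'.symm
    have hS : ({(v', f)} : Finset (V × E)) ∈ lkM G (v, e) := by
      constructor
      · simp only [Finset.mem_singleton, Prod.mk.injEq, not_and]
        intro h; exact absurd h hvv
      · show ({(v, e), (v', f)} : Finset (V × E)) ∈ MCpxM G
        refine two_simplex G v v' e f v' w he hf hvv
          (Ne.symm (hfe e he)) (Ne.symm hvv) hw2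
          (fun y => if y = v then 0 else if y = v' then 1 else 2) ?_ ?_
        · simp [Ne.symm hvv]
        · simp [Ne.symm hvv, hw1, hw2]
    rw [hlk] at hS
    obtain ⟨-, -, hcond2, -, -⟩ := hS
    have := hcond2 (v', e') (Finset.mem_insert_self _ _)
      (v', f) (Finset.mem_insert_of_mem (Finset.mem_singleton_self _)) rfl
    rw [Prod.mk.injEq] at this
    exact hfe e' he' this.2.symm

/-- Let `G` be a finite connected multigraph with at least three vertices.  Two distinct
oriented edges `(v,e)` and `(v',e')` of `G` are parallel (`v = v'` and `e, e'` have the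
same endpoints) iff they are incompatible in `𝔐(G)` and have the same link in `𝔐(G)`. -/
theorem stmt_11 {V E : Type*} [Fintype V] [DecidableEq V] [Fintype E] [DecidableEq E]
    (G : Multigraph V E) (hc : G.Connected) (h3 : 3 ≤ Fintype.card V)
    (v v' : V) (e e' : E) (hv : v ∈ G.ends e) (hv' : v' ∈ G.ends e')
    (hne : (v, e) ≠ (v', e')) :
    (v = v' ∧ G.ends e = G.ends e') ↔
      (¬ IsMorseSimplexM G {(v, e), (v', e')} ∧ lkM G (v, e) = lkM G (v', e')) := by
  constructor
  · rintro ⟨rfl, hee⟩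
    have hnee : e ≠ e' := fun h => hne (by rw [h])
    constructor
    · rintro ⟨-, h2, -, -⟩
      exact hne (h2 (v, e) (by simp) (v, e') (by simp) rfl)
    · exact subset_antisymm (link_subset_parallel G v e e' hv hee hnee)
        (link_subset_parallel G v e' e (hee ▸ hv) hee.symm hnee.symm)
  · rintro ⟨hns, hlk⟩
    by_cases hvv : v = v'
    · subst hvv
      have hnee : e ≠ e' := fun h => hne (by rw [h])
      exact ⟨rfl, same_source_case G v e e' hv hv' hnee hlk⟩
    · exfalso
      obtain ⟨u, hu, huv⟩ := other_endpoint G hv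
      obtain ⟨u'', hu'', hu''v⟩ := other_endpoint G hv'
      set S0 : Finset (V × E) := {(v, e), (v', e')} with hS0
      have hA : ∀ p ∈ S0, p.1 ∈ G.ends p.2 := by
        intro p hp
        rw [hS0] at hp
        simp only [Finset.mem_insert, Finset.mem_singleton] at hp
        rcases hp with rfl | rfl
        exacts [hv, hv']
      by_cases hC : ∀ p ∈ S0, ∀ q ∈ S0, p.2 = q.2 → p = q
      · by_cases hB : ∀ p ∈ S0, ∀ q ∈ S0, p.1 = q.1 → p = q
        · -- an acyclicity violation: a directed 2-cycle through e, e'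
          have hD : ¬ (∀ x : V, ¬ Relation.TransGen
              (fun a b => ∃ e0, (a, e0) ∈ S0 ∧ G.ends e0 = s(a, b)) x x) :=
            fun h => hns ⟨hA, hB, hC, h⟩
          push_neg at hD
          obtain ⟨x, hx⟩ := hD
          have hclaim : ∀ c d, (∃ e0, (c, e0) ∈ S0 ∧ G.ends e0 = s(c, d)) →
              (c = v ∧ d = u) ∨ (c = v' ∧ d = u'') := by
            rintro c d ⟨e0, h0, hend⟩
            rw [hS0] at h0
            simp only [Finset.mem_insert, Finset.mem_singleton, Prod.mk.injEq] at h0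
            rcases h0 with ⟨rfl, rfl⟩ | ⟨rfl, rfl⟩
            · exact Or.inl ⟨rfl, target_unique huv (hu.symm.trans hend)⟩
            · exact Or.inr ⟨rfl, target_unique hu''v (hu''.symm.trans hend)⟩
          by_cases h1 : u = v' <;> by_cases h2 : u'' = v
          · exact not_parallel_case G hc h3 v v' e e' hvv (by rw [hu, h1])
              (by rw [hu'', h2]; exact Sym2.eq_swap) hlk
          · -- u = v', u'' ≠ v
            refine no_loop_of_rank _
              (fun y => if y = v then 0 else if y = v' then 1 else 2) ?_ x hx
            intro c d hcd
            rcases hclaim c d hcd with ⟨rfl, rfl⟩ | ⟨rfl, rfl⟩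
            · subst h1; simp [hvv, Ne.symm hvv]
            · simp [Ne.symm hvv, h2, hu''v]
          · -- u ≠ v', u'' = v
            refine no_loop_of_rank _
              (fun y => if y = v' then 0 else if y = v then 1 else 2) ?_ x hx
            intro c d hcd
            rcases hclaim c d hcd with ⟨rfl, rfl⟩ | ⟨rfl, rfl⟩
            · simp [hvv, h1, huv]
            · subst h2; simp [hvv, Ne.symm hvv]
          · refine no_loop_of_rank _
              (fun y => if y = v ∨ y = v' then 0 else 1) ?_ x hx
            intro c d hcd
            rcases hclaim c d hcd with ⟨rfl, rfl⟩ | ⟨rfl, rfl⟩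
            · simp [huv, h1]
            · simp [h2, hu''v]
        · -- two oriented edges with the same source: forces v = v'
          push_neg at hB
          obtain ⟨p, hp, q, hq, hpq1, hpq2⟩ := hB
          rw [hS0] at hp hq
          simp only [Finset.mem_insert, Finset.mem_singleton] at hp hq
          rcases hp with rfl | rfl <;> rcases hq with rfl | rfl
          · exact hpq2 rfl
          · exact hvv hpq1
          · exact hvv hpq1.symm
          · exact hpq2 rfl
      · -- the same edge with two sources: e = e', hence both ends in s(v, v')
        push_neg at hC
        obtain ⟨p, hp, q, hq, hpq1, hpq2⟩ := hC
        rw [hS0] at hp hq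
        simp only [Finset.mem_insert, Finset.mem_singleton] at hp hq
        have hee : e = e' := by
          rcases hp with rfl | rfl <;> rcases hq with rfl | rfl
          · exact absurd rfl hpq2
          · exact hpq1
          · exact hpq1.symm
          · exact absurd rfl hpq2
        subst hee
        have hv'mem : v' ∈ s(v, u) := hu ▸ hv'
        rw [Sym2.mem_iff] at hv'mem
        rcases hv'mem with rfl | rfl
        · exact hvv rfl
        · exact not_parallel_case G hc h3 v v' e e hvv (by rw [hu]) (by rw [hu]) hlk
end Aux
end

section
/- If {(σ₁,τ₁), (σ₂,τ₂), (σ₃,τ₃)} is a minimal f-cycle of index k−1 in a simplicial complex K (each σᵢ a (k−1)-face of the k-simplex τᵢ, pairwise incompatible as a triple but pairwise compatible), then the subcomplex spanned by τ₁, τ₂, τ₃ has exactly k+2 vertices and a complete 1-skeleton. -/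
/-- `K` is a (finite, abstract) simplicial complex on the vertex type `A`. -/
def IsComplex {A : Type*} (K : Set (Finset A)) : Prop :=
  (∀ s ∈ K, s.Nonempty) ∧ ∀ s ∈ K, ∀ t ⊆ s, t.Nonempty → t ∈ K

/-- `S` is a simplex of the discrete Morse complex `𝔐(K)`: an acyclic matching on the
Hasse diagram of `K`.  Its elements are regular pairs `(σ, τ)` with `σ` a
codimension-one face of `τ`, each simplex of `K` occurs in at most one pair, and there
is no closed gradient path (no directed cycle after reversing matched edges). -/
def IsAcyclicMatching {A : Type*} (K : Set (Finset A))
    (S : Finset (Finset A × Finset A)) : Prop :=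
  (∀ p ∈ S, p.1 ∈ K ∧ p.2 ∈ K ∧ p.1 ⊆ p.2 ∧ p.1.card + 1 = p.2.card) ∧
  (∀ p ∈ S, ∀ q ∈ S, p ≠ q →
    p.1 ≠ q.1 ∧ p.1 ≠ q.2 ∧ p.2 ≠ q.1 ∧ p.2 ≠ q.2) ∧
  (∀ σ : Finset A, ¬ Relation.TransGen
    (fun a b => a ≠ b ∧ ∃ τ, (a, τ) ∈ S ∧ b ⊆ τ ∧ b.card + 1 = τ.card) σ σ)

def sigf {A : Type*} (p₁ p₂ p₃ : Finset A × Finset A) : Fin 3 → Finset A :=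
  fun i => match i with | 0 => p₁.1 | 1 => p₂.1 | 2 => p₃.1

def tauf {A : Type*} (p₁ p₂ p₃ : Finset A × Finset A) : Fin 3 → Finset A :=
  fun i => match i with | 0 => p₁.2 | 1 => p₂.2 | 2 => p₃.2

lemma no_two_cycle {A : Type*} [DecidableEq A] {K : Set (Finset A)} {a b : Finset A × Finset A}
    (h : IsAcyclicMatching K {a, b}) (hab : a ≠ b)
    (h1 : b.1 ⊆ a.2) (h2 : a.1 ⊆ b.2)
    (c1 : b.1.card + 1 = a.2.card) (c2 : a.1.card + 1 = b.2.card) : False := by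
  have hne : a.1 ≠ b.1 := (h.2.1 a (by simp) b (by simp) hab).1
  refine h.2.2 a.1 ?_
  refine Relation.TransGen.tail (b := b.1) (Relation.TransGen.single ?_) ?_
  · exact ⟨hne, a.2, by simp, h1, c1⟩
  · exact ⟨hne.symm, b.2, by simp, h2, c2⟩

lemma fin3_order : ∀ r : Fin 3 → Fin 3 → Bool,
    (∀ i j, ¬(r i j = true ∧ r j i = true)) →
    ¬(r 0 1 = true ∧ r 1 2 = true ∧ r 2 0 = true) →
    ¬(r 0 2 = true ∧ r 2 1 = true ∧ r 1 0 = true) →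
    ∃ f : Fin 3 → Fin 3, ∀ i j, r i j = true → f i < f j := by
  set_option maxRecDepth 20000 in decide

lemma union_eq_of {A : Type*} [DecidableEq A] {s s' t : Finset A} {k : ℕ}
    (hs : s ⊆ t) (hs' : s' ⊆ t) (hne : s ≠ s')
    (hcs : s.card = k) (hcs' : s'.card = k) (hct : t.card = k + 1) :
    s ∪ s' = t := by
  have hsub : s ∪ s' ⊆ t := Finset.union_subset hs hs'
  by_contra h
  have hlt : (s ∪ s').card < t.card :=
    Finset.card_lt_card ⟨hsub, fun h' => h (Finset.Subset.antisymm hsub h')⟩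
  have h1 : s = s ∪ s' := Finset.eq_of_subset_of_card_le Finset.subset_union_left (by omega)
  have h2 : s' = s ∪ s' := Finset.eq_of_subset_of_card_le Finset.subset_union_right (by omega)
  exact hne (h1.trans h2.symm)

lemma main_lemma {A : Type*} [DecidableEq A] {K : Set (Finset A)} (hK : IsComplex K) {k : ℕ}
    {s1 t1 s2 t2 s3 t3 : Finset A}
    (hs1 : s1 ⊆ t1) (hs2 : s2 ⊆ t2) (hs3 : s3 ⊆ t3)
    (hc1 : s1.card = k) (hc2 : s2.card = k) (hc3 : s3.card = k)
    (hT1 : t1.card = k+1) (hT2 : t2.card = k+1) (hT3 : t3.card = k+1)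
    (ht13 : t1 ≠ t3)
    (h21 : s2 ⊆ t1) (h32 : s3 ⊆ t2) (h13 : s1 ⊆ t3)
    (n12 : s1 ≠ s2) (n23 : s2 ≠ s3) (n31 : s3 ≠ s1)
    (hK1 : t1 ∈ K) (hK2 : t2 ∈ K) (hK3 : t3 ∈ K) :
    (t1 ∪ t2 ∪ t3).card = k + 2 ∧
    ∀ x ∈ t1 ∪ t2 ∪ t3, ∀ y ∈ t1 ∪ t2 ∪ t3, x ≠ y → ({x, y} : Finset A) ∈ K := by
  have e1 : s1 ∪ s2 = t1 := union_eq_of hs1 h21 n12 hc1 hc2 hT1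
  have e2 : s2 ∪ s3 = t2 := union_eq_of hs2 h32 n23 hc2 hc3 hT2
  have e3 : s3 ∪ s1 = t3 := union_eq_of hs3 h13 n31 hc3 hc1 hT3
  obtain ⟨c, hcs3, hcs1⟩ : ∃ c ∈ s3, c ∉ s1 := by
    by_contra h; push_neg at h
    exact n31 (Finset.eq_of_subset_of_card_le h (by omega))
  have hdiff : s3 \ s1 = {c} := by
    have hcard : (s3 \ s1).card = 1 := by
      have hu := Finset.card_union_add_card_inter s3 s1
      rw [e3] at hu
      have h2 := Finset.card_sdiff_add_card_inter s3 s1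
      omega
    obtain ⟨a, ha⟩ := Finset.card_eq_one.1 hcard
    have hc : c ∈ s3 \ s1 := Finset.mem_sdiff.2 ⟨hcs3, hcs1⟩
    rw [ha, Finset.mem_singleton] at hc
    rw [ha, hc]
  have hcs2 : c ∉ s2 := by
    intro hmem
    have hsub : s3 ⊆ t1 := by
      intro x hx
      by_cases hx1 : x ∈ s1
      · rw [← e1]; exact Finset.mem_union_left _ hx1
      · have hxc : x ∈ s3 \ s1 := Finset.mem_sdiff.2 ⟨hx, hx1⟩
        rw [hdiff, Finset.mem_singleton] at hxc
        rw [← e1, hxc]; exact Finset.mem_union_right _ hmem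
    have hsub2 : t3 ⊆ t1 := by rw [← e3]; exact Finset.union_subset hsub hs1
    exact ht13 (Finset.eq_of_subset_of_card_le hsub2 (by omega)).symm
  have hct1 : c ∉ t1 := by
    rw [← e1]; simp [hcs1, hcs2]
  have eU : t1 ∪ t2 ∪ t3 = insert c t1 := by
    rw [← e1, ← e2, ← e3]
    ext x
    simp only [Finset.mem_union, Finset.mem_insert]
    have hs3case : x ∈ s3 → x = c ∨ (x ∈ s1 ∨ x ∈ s2) := by
      intro h
      by_cases hx1 : x ∈ s1
      · exact Or.inr (Or.inl hx1)
      · have hxc : x ∈ s3 \ s1 := Finset.mem_sdiff.2 ⟨h, hx1⟩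
        rw [hdiff, Finset.mem_singleton] at hxc
        exact Or.inl hxc
    constructor
    · rintro (((h | h) | (h | h)) | (h | h))
      · exact Or.inr (Or.inl h)
      · exact Or.inr (Or.inr h)
      · exact Or.inr (Or.inr h)
      · exact hs3case h
      · exact hs3case h
      · exact Or.inr (Or.inl h)
    · rintro (rfl | h | h)
      · exact Or.inl (Or.inr (Or.inr hcs3))
      · exact Or.inl (Or.inl (Or.inl h))
      · exact Or.inl (Or.inl (Or.inr h))
  constructor
  · rw [eU, Finset.card_insert_of_notMem hct1, hT1]
  · intro x hx y hy hxy
    have key : ∀ t, t ∈ K → x ∈ t → y ∈ t → ({x, y} : Finset A) ∈ K := by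
      intro t ht hxt hyt
      exact hK.2 t ht {x, y} (by simp [Finset.insert_subset_iff, hxt, hyt])
        ⟨x, Finset.mem_insert_self _ _⟩
    have hx' : x ∈ s1 ∨ x ∈ s2 ∨ x ∈ s3 := by
      rw [← e1, ← e2, ← e3] at hx
      simp only [Finset.mem_union] at hx; tauto
    have hy' : y ∈ s1 ∨ y ∈ s2 ∨ y ∈ s3 := by
      rw [← e1, ← e2, ← e3] at hy
      simp only [Finset.mem_union] at hy; tauto
    rcases hx' with h | h | h <;> rcases hy' with h' | h' | h'
    · exact key t1 hK1 (hs1 h) (hs1 h')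
    · exact key t1 hK1 (hs1 h) (h21 h')
    · exact key t3 hK3 (h13 h) (hs3 h')
    · exact key t1 hK1 (h21 h) (hs1 h')
    · exact key t1 hK1 (h21 h) (h21 h')
    · exact key t2 hK2 (hs2 h) (h32 h')
    · exact key t3 hK3 (hs3 h) (h13 h')
    · exact key t2 hK2 (h32 h) (hs2 h')
    · exact key t2 hK2 (h32 h) (h32 h')


/-- If `{(σ₁,τ₁), (σ₂,τ₂), (σ₃,τ₃)}` is a minimal `f`-cycle of index `k - 1` in `K`
(pairwise compatible but incompatible as a triple), then the subcomplex spanned by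
`τ₁, τ₂, τ₃` has exactly `k + 2` vertices and a complete 1-skeleton. -/
theorem stmt_16 {A : Type*} [DecidableEq A] (K : Set (Finset A)) (hK : IsComplex K)
    (k : ℕ) (hk : 1 ≤ k) (p₁ p₂ p₃ : Finset A × Finset A)
    (hne : p₁ ≠ p₂ ∧ p₁ ≠ p₃ ∧ p₂ ≠ p₃)
    (hidx : p₁.1.card = k ∧ p₂.1.card = k ∧ p₃.1.card = k)
    (h12 : IsAcyclicMatching K {p₁, p₂})
    (h13 : IsAcyclicMatching K {p₁, p₃})
    (h23 : IsAcyclicMatching K {p₂, p₃})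
    (h123 : ¬ IsAcyclicMatching K {p₁, p₂, p₃}) :
    (p₁.2 ∪ p₂.2 ∪ p₃.2).card = k + 2 ∧
    ∀ x ∈ p₁.2 ∪ p₂.2 ∪ p₃.2, ∀ y ∈ p₁.2 ∪ p₂.2 ∪ p₃.2,
      x ≠ y → ({x, y} : Finset A) ∈ K := by
  obtain ⟨n12p, n13p, n23p⟩ := hne
  obtain ⟨hi1, hi2, hi3⟩ := hidx
  have f1 := h12.1 p₁ (by simp)
  have f2 := h12.1 p₂ (by simp)
  have f3 := h13.1 p₃ (by simp)
  have d12 := h12.2.1 p₁ (by simp) p₂ (by simp) n12p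
  have d13 := h13.2.1 p₁ (by simp) p₃ (by simp) n13p
  have d23 := h23.2.1 p₂ (by simp) p₃ (by simp) n23p
  have tc1 : p₁.2.card = k + 1 := by have := f1.2.2.2; omega
  have tc2 : p₂.2.card = k + 1 := by have := f2.2.2.2; omega
  have tc3 : p₃.2.card = k + 1 := by have := f3.2.2.2; omega
  by_cases hA : p₂.1 ⊆ p₁.2 ∧ p₃.1 ⊆ p₂.2 ∧ p₁.1 ⊆ p₃.2
  · exact main_lemma hK f1.2.2.1 f2.2.2.1 f3.2.2.1 hi1 hi2 hi3 tc1 tc2 tc3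
      d13.2.2.2 hA.1 hA.2.1 hA.2.2 d12.1 d23.1 d13.1.symm f1.2.1 f2.2.1 f3.2.1
  by_cases hB : p₃.1 ⊆ p₁.2 ∧ p₂.1 ⊆ p₃.2 ∧ p₁.1 ⊆ p₂.2
  · have hmain := main_lemma hK f1.2.2.1 f3.2.2.1 f2.2.2.1 hi1 hi3 hi2 tc1 tc3 tc2
      d12.2.2.2 hB.1 hB.2.1 hB.2.2 d13.1 d23.1.symm d12.1.symm f1.2.1 f3.2.1 f2.2.1
    have hu : p₁.2 ∪ p₃.2 ∪ p₂.2 = p₁.2 ∪ p₂.2 ∪ p₃.2 := Finset.union_right_comm _ _ _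
    rw [hu] at hmain
    exact hmain
  exfalso
  -- the triple matching fails only through a cycle
  have hcyc : ∃ x, Relation.TransGen
      (fun a b => a ≠ b ∧ ∃ τ, (a, τ) ∈ ({p₁, p₂, p₃} : Finset (Finset A × Finset A)) ∧
        b ⊆ τ ∧ b.card + 1 = τ.card) x x := by
    by_contra hac
    push_neg at hac
    refine h123 ⟨?_, ?_, fun σ h => hac σ h⟩
    · intro p hp
      simp only [Finset.mem_insert, Finset.mem_singleton] at hp
      rcases hp with rfl | rfl | rfl
      exacts [f1, f2, f3]
    · intro p hp q hq hpq
      simp only [Finset.mem_insert, Finset.mem_singleton] at hp hq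
      rcases hp with hp | hp | hp <;> rcases hq with hq | hq | hq <;>
        rw [hp, hq] at hpq ⊢
      · exact absurd rfl hpq
      · exact d12
      · exact d13
      · exact h12.2.1 p₂ (by simp) p₁ (by simp) hpq
      · exact absurd rfl hpq
      · exact d23
      · exact h13.2.1 p₃ (by simp) p₁ (by simp) hpq
      · exact h23.2.1 p₃ (by simp) p₂ (by simp) hpq
      · exact absurd rfl hpq
  obtain ⟨x, hx⟩ := hcyc
  set s : Fin 3 → Finset A := sigf p₁ p₂ p₃ with hs
  set t : Fin 3 → Finset A := tauf p₁ p₂ p₃ with ht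
  have hsrc : ∀ {a b : Finset A},
      (a ≠ b ∧ ∃ τ, (a, τ) ∈ ({p₁, p₂, p₃} : Finset (Finset A × Finset A)) ∧
        b ⊆ τ ∧ b.card + 1 = τ.card) → ∃ i : Fin 3, a = s i ∧ b ⊆ t i := by
    rintro a b ⟨hab, τ, hmem, hsub, hcard⟩
    simp only [Finset.mem_insert, Finset.mem_singleton] at hmem
    rcases hmem with h | h | h
    · exact ⟨0, congrArg Prod.fst h, by rw [show t 0 = p₁.2 from rfl, ← congrArg Prod.snd h]; exact hsub⟩
    · exact ⟨1, congrArg Prod.fst h, by rw [show t 1 = p₂.2 from rfl, ← congrArg Prod.snd h]; exact hsub⟩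
    · exact ⟨2, congrArg Prod.fst h, by rw [show t 2 = p₃.2 from rfl, ← congrArg Prod.snd h]; exact hsub⟩
  have sinj : ∀ i j : Fin 3, s i = s j → i = j := by
    intro i j
    fin_cases i <;> fin_cases j <;> intro h <;>
      first
        | rfl
        | exact absurd h d12.1
        | exact absurd h d13.1
        | exact absurd h d23.1
        | exact absurd h.symm d12.1
        | exact absurd h.symm d13.1
        | exact absurd h.symm d23.1
  -- lift the cycle to the sigma vertices
  set R' : Finset A → Finset A → Prop := fun a b =>
    (a ≠ b ∧ ∃ τ, (a, τ) ∈ ({p₁, p₂, p₃} : Finset (Finset A × Finset A)) ∧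
      b ⊆ τ ∧ b.card + 1 = τ.card) ∧ (∃ i, a = s i) ∧ (∃ j, b = s j) with hR'
  have lift : ∀ y z : Finset A, Relation.TransGen
      (fun a b => a ≠ b ∧ ∃ τ, (a, τ) ∈ ({p₁, p₂, p₃} : Finset (Finset A × Finset A)) ∧
        b ⊆ τ ∧ b.card + 1 = τ.card) y z → (∃ j, z = s j) → Relation.TransGen R' y z := by
    intro y z h
    induction h with
    | single h1 =>
      intro hz
      obtain ⟨i, hi, -⟩ := hsrc h1
      exact Relation.TransGen.single ⟨h1, ⟨i, hi⟩, hz⟩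
    | tail h1 h2 ih =>
      intro hz
      obtain ⟨i, hi, -⟩ := hsrc h2
      exact (ih ⟨i, hi⟩).tail ⟨h2, ⟨i, hi⟩, hz⟩
  have hxS : ∃ i, x = s i := by
    obtain ⟨b, hb, -⟩ := Relation.TransGen.head'_iff.1 hx
    obtain ⟨i, hi, -⟩ := hsrc hb
    exact ⟨i, hi⟩
  have hx' : Relation.TransGen R' x x := lift x x hx hxS
  -- build the order
  have no2 : ∀ i j : Fin 3,
      ¬((fun i j => decide (¬ i = j ∧ s j ⊆ t i)) i j = true ∧
        (fun i j => decide (¬ i = j ∧ s j ⊆ t i)) j i = true) := by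
    intro i j hij
    simp only [decide_eq_true_eq] at hij
    obtain ⟨⟨hij1, hij2⟩, ⟨hji1, hji2⟩⟩ := hij
    fin_cases i <;> fin_cases j
    · exact hij1 rfl
    · exact no_two_cycle h12 n12p hij2 hji2 (by omega) (by omega)
    · exact no_two_cycle h13 n13p hij2 hji2 (by omega) (by omega)
    · exact no_two_cycle h12 n12p hji2 hij2 (by omega) (by omega)
    · exact hij1 rfl
    · exact no_two_cycle h23 n23p hij2 hji2 (by omega) (by omega)
    · exact no_two_cycle h13 n13p hji2 hij2 (by omega) (by omega)
    · exact no_two_cycle h23 n23p hji2 hij2 (by omega) (by omega)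
    · exact hij1 rfl
  have h3a : ¬((fun i j => decide (¬ i = j ∧ s j ⊆ t i)) 0 1 = true ∧
      (fun i j => decide (¬ i = j ∧ s j ⊆ t i)) 1 2 = true ∧
      (fun i j => decide (¬ i = j ∧ s j ⊆ t i)) 2 0 = true) := by
    intro h
    simp only [decide_eq_true_eq] at h
    exact hA ⟨h.1.2, h.2.1.2, h.2.2.2⟩
  have h3b : ¬((fun i j => decide (¬ i = j ∧ s j ⊆ t i)) 0 2 = true ∧
      (fun i j => decide (¬ i = j ∧ s j ⊆ t i)) 2 1 = true ∧
      (fun i j => decide (¬ i = j ∧ s j ⊆ t i)) 1 0 = true) := by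
    intro h
    simp only [decide_eq_true_eq] at h
    exact hB ⟨h.1.2, h.2.1.2, h.2.2.2⟩
  obtain ⟨f, hf⟩ := fin3_order (fun i j => decide (¬ i = j ∧ s j ⊆ t i)) no2 h3a h3b
  set w : Finset A → Fin 3 := fun z =>
    if z = p₁.1 then f 0 else if z = p₂.1 then f 1 else f 2 with hwdef
  have hw : ∀ i, w (s i) = f i := by
    intro i
    fin_cases i
    · show w p₁.1 = f 0
      simp [hwdef]
    · show w p₂.1 = f 1
      simp [hwdef, d12.1.symm]
    · show w p₃.1 = f 2
      simp [hwdef, d13.1.symm, d23.1.symm]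
  have hmono : ∀ a b : Finset A, R' a b → w a < w b := by
    rintro a b ⟨hR, ⟨i, rfl⟩, ⟨j, rfl⟩⟩
    obtain ⟨m, hm, hbm⟩ := hsrc hR
    have him : i = m := sinj i m hm
    subst him
    have hij : ¬ i = j := fun h => hR.1 (by rw [h])
    have := hf i j (by simp only [decide_eq_true_eq]; exact ⟨hij, hbm⟩)
    rw [hw, hw]
    exact this
  have hfin := Relation.TransGen.mono hmono _ _ hx'
  have htr : Transitive (fun a b : Finset A => w a < w b) := fun a b c h1 h2 => lt_trans h1 h2
  rw [@Relation.transGen_eq_self _ _ ⟨fun a b c => @htr a b c⟩] at hfin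
  exact lt_irrefl _ hfin
end

section
/- Every cycle e₀, e₁, …, e_r in the 1-skeleton of a simplicial complex K determines exactly two f-cycles of index 0 in 𝔐(K): choosing a vertex v₀ of e₀, the set {(v₀,e₀), (v₁,e₁), …, (v_r,e_r)} with vᵢ ≠ v_{i+1} for all i, and the analogous set starting from the other vertex of e₀; each of these sets of oriented edges is incompatible in 𝔐(K) while every proper subset is compatible. -/
set_option linter.unusedSectionVars false

section Helpers
variable {A : Type*} [DecidableEq A]

lemma fin_succ_ne {r : ℕ} (hr : 2 ≤ r) (i : Fin (r+1)) : i + 1 ≠ i := by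
  intro h
  have h2 : (1 : Fin (r+1)) = 0 :=
    add_left_cancel (a := i) (b := (1 : Fin (r+1))) (c := 0) (by simpa using h)
  have h3 := congrArg Fin.val h2
  rw [Fin.val_one', Fin.val_zero, Nat.mod_eq_of_lt (by omega : 1 < r + 1)] at h3
  omega

lemma fin_succ_succ_ne {r : ℕ} (hr : 2 ≤ r) (i : Fin (r+1)) : i + 1 + 1 ≠ i := by
  intro h
  have h2 : (1 + 1 : Fin (r+1)) = 0 :=
    add_left_cancel (a := i) (b := (1 + 1 : Fin (r+1))) (c := 0)
      (by rw [← add_assoc]; simpa using h)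
  have h3 := congrArg Fin.val h2
  rw [Fin.val_add, Fin.val_one', Fin.val_zero, Nat.mod_eq_of_lt (by omega : 1 < r + 1),
    Nat.mod_eq_of_lt (by omega : 1 + 1 < r + 1)] at h3
  omega

lemma fin_sub_one_lt {r : ℕ} (d : Fin (r+1)) (hd : d ≠ 0) : (d - 1).val < d.val := by
  rw [Fin.coe_sub_one, if_neg hd]
  have hv : d.val ≠ 0 := by intro h; exact hd (Fin.ext (by simp [h]))
  omega

lemma sub_card_one {x y : A} {b : Finset A} (hb : b ⊆ ({x, y} : Finset A))
    (hc : b.card = 1) : b = {x} ∨ b = {y} := by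
  obtain ⟨z, rfl⟩ := Finset.card_eq_one.mp hc
  have := hb (Finset.mem_singleton_self z)
  simp only [Finset.mem_insert, Finset.mem_singleton] at this
  rcases this with h | h <;> [left; right] <;> rw [h]

variable {r : ℕ} {v : Fin (r+1) → A}

lemma sing_ne (hinj : Function.Injective v) {i j : Fin (r+1)} (hij : i ≠ j) : ({v i} : Finset A) ≠ {v j} :=
  fun h => hij (hinj (Finset.singleton_injective h))

lemma vne (hr : 2 ≤ r) (hinj : Function.Injective v) (i : Fin (r+1)) : v i ≠ v (i+1) :=
  fun h => fin_succ_ne hr i (hinj h.symm)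

lemma edge_card (hr : 2 ≤ r) (hinj : Function.Injective v) (i : Fin (r+1)) : ({v i, v (i+1)} : Finset A).card = 2 :=
  Finset.card_pair (vne hr hinj i)

lemma edge_inj (hr : 2 ≤ r) (hinj : Function.Injective v) {i j : Fin (r+1)}
    (h : ({v i, v (i+1)} : Finset A) = ({v j, v (j+1)} : Finset A)) : i = j := by
  have h1 : v i = v j ∨ v i = v (j+1) := by
    have : v i ∈ ({v j, v (j+1)} : Finset A) := h ▸ Finset.mem_insert_self _ _
    simpa using this
  have h2 : v (i+1) = v j ∨ v (i+1) = v (j+1) := by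
    have : v (i+1) ∈ ({v j, v (j+1)} : Finset A) := h ▸ (by simp)
    simpa using this
  rcases h1 with h1 | h1
  · exact hinj h1
  · rcases h2 with h2 | h2
    · -- i = j+1, i+1 = j : j = j+1+1
      have e1 := hinj h1; have e2 := hinj h2
      exfalso
      apply fin_succ_succ_ne hr j
      rw [← e1, e2]
    · -- i = j+1, i+1 = j+1 : i = j and i = j+1 : j+1 = j
      have e1 := hinj h1; have e2 := hinj h2
      have : i = j := add_right_cancel e2
      exfalso; exact fin_succ_ne hr j (by rw [← e1, this])

end Helpers

theorem keyS {A : Type*} [DecidableEq A] {r : ℕ} (hr : 2 ≤ r) (K : Set (Finset A))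
    (hK : IsComplex K) (v : Fin (r + 1) → A) (hinj : Function.Injective v)
    (hedge : ∀ i : Fin (r + 1), ({v i, v (i + 1)} : Finset A) ∈ K)
    (S : Finset (Finset A × Finset A))
    (hS : S = Finset.univ.image
      (fun i : Fin (r + 1) => (({v i} : Finset A), ({v i, v (i + 1)} : Finset A)))) :
    ¬ IsAcyclicMatching K S ∧ ∀ T ⊆ S, T ≠ S → IsAcyclicMatching K T := by
  letI : CommRing (Fin (r+1)) := Fin.instCommRing _
  have memS : ∀ p, p ∈ S ↔
      ∃ i : Fin (r+1), p = (({v i} : Finset A), ({v i, v (i+1)} : Finset A)) := by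
    intro p; subst hS
    simp only [Finset.mem_image, Finset.mem_univ, true_and]
    exact ⟨fun ⟨i, h⟩ => ⟨i, h.symm⟩, fun ⟨i, h⟩ => ⟨i, h.symm⟩⟩
  constructor
  · intro hmat
    obtain ⟨-, -, h3⟩ := hmat
    have step : ∀ i : Fin (r+1),
        (fun a b : Finset A => a ≠ b ∧ ∃ τ, (a, τ) ∈ S ∧ b ⊆ τ ∧ b.card + 1 = τ.card)
          {v i} {v (i+1)} := by
      intro i
      refine ⟨sing_ne hinj (Ne.symm (fin_succ_ne hr i)), {v i, v (i+1)},
        (memS _).mpr ⟨i, rfl⟩, by simp, ?_⟩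
      rw [Finset.card_singleton, edge_card hr hinj]
    have chain : ∀ k : ℕ, Relation.TransGen
        (fun a b : Finset A => a ≠ b ∧ ∃ τ, (a, τ) ∈ S ∧ b ⊆ τ ∧ b.card + 1 = τ.card)
        {v 0} {v ((k : Fin (r+1)) + 1)} := by
      intro k; induction k with
      | zero =>
        rw [show (((0:ℕ)) : Fin (r+1)) = 0 from Nat.cast_zero]
        exact Relation.TransGen.single (step 0)
      | succ k ih =>
        have e1 : (((k+1 : ℕ)) : Fin (r+1)) + 1 = ((k : Fin (r+1)) + 1) + 1 := by
          push_cast; ring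
        rw [e1]
        exact ih.tail (step _)
    have h0 : ((r : Fin (r+1)) + 1) = 0 := by
      have := Fin.natCast_self (r+1)
      push_cast at this
      exact this
    exact h3 {v 0} (by have := chain r; rwa [h0] at this)
  · intro T hTS hTne
    obtain ⟨x, hxS, hxT⟩ := Finset.exists_of_ssubset (lt_of_le_of_ne hTS hTne)
    obtain ⟨i₀, rfl⟩ := (memS x).mp hxS
    have memT : ∀ p ∈ T, ∃ i : Fin (r+1), i ≠ i₀ ∧
        p = (({v i} : Finset A), ({v i, v (i+1)} : Finset A)) := by
      intro p hp
      obtain ⟨i, rfl⟩ := (memS p).mp (hTS hp)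
      refine ⟨i, ?_, rfl⟩
      rintro rfl; exact hxT hp
    refine ⟨?_, ?_, ?_⟩
    · intro p hp
      obtain ⟨i, -, rfl⟩ := memT p hp
      refine ⟨?_, hedge i, by simp, ?_⟩
      · exact hK.2 _ (hedge i) {v i} (by simp) ⟨v i, Finset.mem_singleton_self _⟩
      · rw [Finset.card_singleton, edge_card hr hinj]
    · intro p hp q hq hpq
      obtain ⟨i, -, rfl⟩ := memT p hp
      obtain ⟨j, -, rfl⟩ := memT q hq
      have hij : i ≠ j := fun h => hpq (by rw [h])
      refine ⟨sing_ne hinj hij, ?_, ?_, fun h => hij (edge_inj hr hinj h)⟩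
      · intro h; have := congrArg Finset.card h
        rw [Finset.card_singleton, edge_card hr hinj] at this; omega
      · intro h; have := congrArg Finset.card h
        rw [Finset.card_singleton, edge_card hr hinj] at this; omega
    · intro σ hcyc
      have relchar : ∀ a b : Finset A,
          (a ≠ b ∧ ∃ τ, (a, τ) ∈ T ∧ b ⊆ τ ∧ b.card + 1 = τ.card) →
          ∃ j : Fin (r+1), j ≠ i₀ ∧ a = {v j} ∧ b = {v (j+1)} := by
        rintro a b ⟨hab, τ, hmem, hsub, hcard⟩
        obtain ⟨j, hj, hpe⟩ := memT _ hmem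
        obtain ⟨ha, hτ⟩ := Prod.mk.inj hpe
        subst ha; subst hτ
        have hbc : b.card = 1 := by
          rw [edge_card hr hinj] at hcard; omega
        rcases sub_card_one hsub hbc with h | h
        · exact absurd h.symm hab
        · exact ⟨j, hj, rfl, h⟩
      have dec : ∀ j : Fin (r+1), j ≠ i₀ → (i₀ - (j+1)).val < (i₀ - j).val := by
        intro j hj
        have hd : i₀ - j ≠ 0 := sub_ne_zero.mpr (Ne.symm hj)
        rw [sub_add_eq_sub_sub]
        exact fin_sub_one_lt _ hd
      have main : ∀ a b : Finset A, Relation.TransGen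
          (fun a b : Finset A => a ≠ b ∧ ∃ τ, (a, τ) ∈ T ∧ b ⊆ τ ∧ b.card + 1 = τ.card) a b →
          ∃ j k : Fin (r+1), a = {v j} ∧ b = {v k} ∧ (i₀ - k).val < (i₀ - j).val := by
        intro a b h
        induction h with
        | single h =>
          obtain ⟨j, hj, rfl, rfl⟩ := relchar _ _ h
          exact ⟨j, j+1, rfl, rfl, dec j hj⟩
        | tail hab hbc ih =>
          obtain ⟨j, k, ha, hb, hlt⟩ := ih
          obtain ⟨k', hk', hb', rfl⟩ := relchar _ _ hbc
          have hkk : k = k' := hinj (Finset.singleton_injective (hb.symm.trans hb'))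
          subst hkk
          exact ⟨j, k+1, ha, rfl, lt_trans (dec k hk') hlt⟩
      obtain ⟨j, k, h1, h2, hlt⟩ := main σ σ hcyc
      have : j = k := hinj (Finset.singleton_injective (h1.symm.trans h2))
      subst this
      exact lt_irrefl _ hlt

/-- A cycle `e₀, …, e_r` in the 1-skeleton of `K` (given by distinct vertices
`v 0, …, v r` with consecutive edges `e_i = {v i, v (i+1)}`, indices mod `r + 1`)
determines exactly two `f`-cycles of index `0` in `𝔐(K)`: the two coherent
orientations `S = {({v i}, e_i)}ᵢ` and `S' = {({v (i+1)}, e_i)}ᵢ`.  Each of them is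
incompatible while all proper subsets are compatible, and any minimally incompatible
set of index-0 pairs using each edge `e_i` exactly once equals `S` or `S'`. -/
theorem stmt_17 {A : Type*} [DecidableEq A] (K : Set (Finset A)) (hK : IsComplex K)
    (r : ℕ) (hr : 2 ≤ r) (v : Fin (r + 1) → A) (hinj : Function.Injective v)
    (hedge : ∀ i : Fin (r + 1), ({v i, v (i + 1)} : Finset A) ∈ K)
    (S S' : Finset (Finset A × Finset A))
    (hS : S = Finset.univ.image
      (fun i : Fin (r + 1) => (({v i} : Finset A), ({v i, v (i + 1)} : Finset A))))
    (hS' : S' = Finset.univ.image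
      (fun i : Fin (r + 1) => (({v (i + 1)} : Finset A), ({v i, v (i + 1)} : Finset A)))) :
    (¬ IsAcyclicMatching K S ∧ ∀ T ⊆ S, T ≠ S → IsAcyclicMatching K T) ∧
    (¬ IsAcyclicMatching K S' ∧ ∀ T ⊆ S', T ≠ S' → IsAcyclicMatching K T) ∧
    (∀ T : Finset (Finset A × Finset A),
      (∀ p ∈ T, ∃ i : Fin (r + 1),
        p.2 = ({v i, v (i + 1)} : Finset A) ∧
          (p.1 = ({v i} : Finset A) ∨ p.1 = ({v (i + 1)} : Finset A))) →
      (∀ i : Fin (r + 1), ∃ p ∈ T, p.2 = ({v i, v (i + 1)} : Finset A)) →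
      (∀ p ∈ T, ∀ q ∈ T, p.2 = q.2 → p = q) →
      ¬ IsAcyclicMatching K T →
      (∀ U ⊆ T, U ≠ T → IsAcyclicMatching K U) →
      T = S ∨ T = S') := by
  letI : CommRing (Fin (r+1)) := Fin.instCommRing _
  -- second orientation as the first one for the reversed vertex sequence
  have hw : Function.Injective (fun i : Fin (r+1) => v (-i)) :=
    hinj.comp neg_injective
  have hwedge : ∀ i : Fin (r + 1), ({v (-i), v (-(i+1))} : Finset A) ∈ K := by
    intro i
    have h := hedge (-(i+1))
    have e1 : (-(i+1) + 1 : Fin (r+1)) = -i := by ring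
    rw [e1, Finset.pair_comm] at h
    have e2 : (-(i+1) : Fin (r+1)) = -i - 1 := by ring
    rw [e2] at h ⊢
    exact h
  have hS'2 : S' = Finset.univ.image
      (fun i : Fin (r+1) => (({v (-i)} : Finset A), ({v (-i), v (-(i+1))} : Finset A))) := by
    rw [hS']; apply Finset.ext; intro p
    simp only [Finset.mem_image, Finset.mem_univ, true_and]
    constructor
    · rintro ⟨i, rfl⟩
      refine ⟨-(i+1), ?_⟩
      have e1 : (-(-(i+1)) : Fin (r+1)) = i + 1 := neg_neg _
      have e2 : (-(-(i+1) + 1) : Fin (r+1)) = i := by ring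
      rw [e1, e2, Finset.pair_comm]
    · rintro ⟨i, rfl⟩
      refine ⟨-i - 1, ?_⟩
      have e1 : (-i - 1 + 1 : Fin (r+1)) = -i := by ring
      have e2 : (-i - 1 : Fin (r+1)) = -(i+1) := by ring
      rw [e1, e2, Finset.pair_comm]
  have key2 := keyS hr K hK (fun i : Fin (r+1) => v (-i)) hw hwedge S' hS'2
  refine ⟨keyS hr K hK v hinj hedge S hS, key2, ?_⟩
  intro T h1 h2 h3 _h4 h5
  choose p hpT hpe using h2
  have huniq : ∀ q ∈ T, ∀ i : Fin (r+1),
      q.2 = ({v i, v (i+1)} : Finset A) → q = p i := by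
    intro q hq i hqi
    exact h3 q hq (p i) (hpT i) (hqi.trans (hpe i).symm)
  have hp1 : ∀ i : Fin (r+1), (p i).1 = ({v i} : Finset A) ∨
      (p i).1 = ({v (i+1)} : Finset A) := by
    intro i
    obtain ⟨j, hj2, hj1⟩ := h1 (p i) (hpT i)
    have hij : i = j := edge_inj hr hinj ((hpe i).symm.trans hj2)
    rw [← hij] at hj1
    exact hj1
  have hpne : ∀ i j : Fin (r+1), i ≠ j → p i ≠ p j := by
    intro i j hij h
    exact hij (edge_inj hr hinj ((hpe i).symm.trans (by rw [h]; exact hpe j)))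
  have hexk : ∀ a b : Fin (r+1), ∃ k, k ≠ a ∧ k ≠ b := by
    intro a b
    by_contra hc
    push_neg at hc
    have hsub : (Finset.univ : Finset (Fin (r+1))) ⊆ {a, b} := by
      intro k _
      simp only [Finset.mem_insert, Finset.mem_singleton]
      by_cases h : k = a
      · exact Or.inl h
      · exact Or.inr (hc k h)
    have h3' := Finset.card_le_card hsub
    have h2' : ({a, b} : Finset (Fin (r+1))).card ≤ 2 :=
      (Finset.card_insert_le a {b}).trans (by simp)
    rw [Finset.card_univ, Fintype.card_fin] at h3'
    omega
  have hfst : ∀ i j : Fin (r+1), i ≠ j → (p i).1 ≠ (p j).1 := by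
    intro i j hij heq
    obtain ⟨k, hki, hkj⟩ := hexk i j
    have hU : ({p i, p j} : Finset (Finset A × Finset A)) ⊆ T := by
      intro q hq
      simp only [Finset.mem_insert, Finset.mem_singleton] at hq
      rcases hq with rfl | rfl
      · exact hpT i
      · exact hpT j
    have hUne : ({p i, p j} : Finset (Finset A × Finset A)) ≠ T := by
      intro h
      have : p k ∈ ({p i, p j} : Finset (Finset A × Finset A)) := h ▸ hpT k
      simp only [Finset.mem_insert, Finset.mem_singleton] at this
      rcases this with h' | h'
      · exact hpne k i hki h'
      · exact hpne k j hkj h'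
    have hacyc := h5 _ hU hUne
    exact (hacyc.2.1 (p i) (Finset.mem_insert_self _ _) (p j) (by simp)
      (hpne i j hij)).1 heq
  have tail_back : ∀ i : Fin (r+1), (p i).1 = ({v i} : Finset A) →
      (p (i-1)).1 = ({v (i-1)} : Finset A) := by
    intro i hi
    rcases hp1 (i-1) with h | h
    · exact h
    · exfalso
      have hsub1 : (i - 1 : Fin (r+1)) + 1 = i := by ring
      rw [hsub1] at h
      have hne : (i - 1 : Fin (r+1)) ≠ i := by
        intro he
        have h2 : i = i + 1 := by
          calc i = (i-1) + 1 := hsub1.symm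
          _ = i + 1 := by rw [he]
        exact fin_succ_ne hr i h2.symm
      exact hfst (i-1) i hne (h.trans hi.symm)
  have head_fwd : ∀ i : Fin (r+1), (p i).1 = ({v (i+1)} : Finset A) →
      (p (i+1)).1 = ({v (i+1+1)} : Finset A) := by
    intro i hi
    rcases hp1 (i+1) with h | h
    · exact absurd (hi.trans h.symm) (hfst i (i+1) (Ne.symm (fin_succ_ne hr i)))
    · exact h
  rcases hp1 0 with h0 | h0
  · left
    have all : ∀ k : ℕ, (p ((0 : Fin (r+1)) - (k : Fin (r+1)))).1 =
        ({v ((0 : Fin (r+1)) - (k : Fin (r+1)))} : Finset A) := by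
      intro k; induction k with
      | zero => simpa using h0
      | succ k ih =>
        have e1 : (0 : Fin (r+1)) - ((k+1 : ℕ) : Fin (r+1)) =
            ((0 : Fin (r+1)) - (k : Fin (r+1))) - 1 := by push_cast; ring
        rw [e1]
        exact tail_back _ ih
    have allj : ∀ j : Fin (r+1), (p j).1 = ({v j} : Finset A) := by
      intro j
      have e1 : (0 : Fin (r+1)) - ((((0 : Fin (r+1)) - j).val : ℕ) : Fin (r+1)) = j := by
        rw [Fin.cast_val_eq_self]; ring
      have := all ((0 : Fin (r+1)) - j).val
      rwa [e1] at this
    rw [hS]; apply Finset.ext; intro q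
    simp only [Finset.mem_image, Finset.mem_univ, true_and]
    constructor
    · intro hq
      obtain ⟨i, hi2, -⟩ := h1 q hq
      refine ⟨i, ?_⟩
      rw [huniq q hq i hi2]
      exact Prod.ext (allj i).symm (hpe i).symm
    · rintro ⟨i, rfl⟩
      have : p i = (({v i} : Finset A), ({v i, v (i+1)} : Finset A)) :=
        Prod.ext (allj i) (hpe i)
      rw [← this]; exact hpT i
  · right
    have all : ∀ k : ℕ, (p ((k : Fin (r+1)))).1 = ({v ((k : Fin (r+1)) + 1)} : Finset A) := by
      intro k; induction k with
      | zero =>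
        rw [show ((0:ℕ) : Fin (r+1)) = 0 from Nat.cast_zero]
        exact h0
      | succ k ih =>
        have e1 : ((k+1 : ℕ) : Fin (r+1)) = (k : Fin (r+1)) + 1 := by push_cast; ring
        rw [e1]
        exact head_fwd _ ih
    have allj : ∀ j : Fin (r+1), (p j).1 = ({v (j+1)} : Finset A) := by
      intro j
      have := all j.val
      rwa [Fin.cast_val_eq_self] at this
    rw [hS']; apply Finset.ext; intro q
    simp only [Finset.mem_image, Finset.mem_univ, true_and]
    constructor
    · intro hq
      obtain ⟨i, hi2, -⟩ := h1 q hq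
      refine ⟨i, ?_⟩
      rw [huniq q hq i hi2]
      exact Prod.ext (allj i).symm (hpe i).symm
    · rintro ⟨i, rfl⟩
      have : p i = (({v (i+1)} : Finset A), ({v i, v (i+1)} : Finset A)) :=
        Prod.ext (allj i) (hpe i)
      rw [← this]; exact hpT i
end
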